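/- arXiv:2310.01759 — 11 statements merged into one kernel-verified Lean document; each statement's English description precedes it below -/
import Mathlib

section
/- Let Γ be the 3-uniform hypergraph on ℝ whose hyperedges are the triples {x,y,z} of pairwise distinct reals satisfying (in some ordering) x - 2y + z = 0, and let A ⊆ ℝ be a subfield. Then the remainder graph Γ_A on ℝ \ A (connecting distinct x, y if there exists z ∈ A with {x,y,z} ∈ Γ) contains no circuits of odd length. -/
/-- The 3-uniform hypergraph on ℝ given (in some ordering) by `x - 2y + z = 0`. -/
def tEdge (x y z : ℝ) : Prop :=
  x ≠ y ∧ x ≠ z ∧ y ≠ z ∧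
    (x - 2*y + z = 0 ∨ y - 2*x + z = 0 ∨ x - 2*z + y = 0)

/-- The remainder graph of the hypergraph `tEdge` over a subfield `A`. -/
def tRemAdj (A : Subfield ℝ) (x y : ℝ) : Prop :=
  x ∉ A ∧ y ∉ A ∧ x ≠ y ∧ ∃ z ∈ A, tEdge x y z

lemma tRem_step (A : Subfield ℝ) {x y : ℝ} (h : tRemAdj A x y) :
    ∃ c a : ℝ, a ∈ A ∧ y = c * x + a ∧ (c = 1/2 ∨ c = 2 ∨ c = -1) := by
  obtain ⟨hx, hy, hxy, z, hz, _, _, _, hrel⟩ := h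
  have h2 : (2:ℝ) ∈ A := by
    have := A.add_mem A.one_mem A.one_mem; norm_num at this ⊢
  rcases hrel with h' | h' | h'
  · exact ⟨1/2, z/2, by simpa [div_eq_mul_inv] using A.mul_mem hz (A.inv_mem h2),
      by linarith, Or.inl rfl⟩
  · exact ⟨2, -z, A.neg_mem hz, by linarith, Or.inr (Or.inl rfl)⟩
  · exact ⟨-1, 2*z, A.mul_mem h2 hz, by linarith, Or.inr (Or.inr rfl)⟩

/-- The remainder graph of the hypergraph `x - 2y + z = 0` over a subfield contains
no circuits of odd length. -/
theorem stmt0 (A : Subfield ℝ) (n : ℕ) (x : ℕ → ℝ)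
    (hcirc : ∀ i < n, tRemAdj A (x i) (x (i+1))) (hclose : x n = x 0) :
    ¬ Odd n := by
  intro hodd
  have hn : 0 < n := hodd.pos
  have hx0 : x 0 ∉ A := (hcirc 0 hn).1
  have h2A : (2:ℝ) ∈ A := by
    have := A.add_mem A.one_mem A.one_mem; norm_num at this ⊢
  have key : ∀ i, i ≤ n → ∃ (s : ℕ) (e : ℤ) (a : ℝ), a ∈ A ∧
      x i = (-1)^s * 2^e * x 0 + a ∧ Even ((s:ℤ) + e - i) := by
    intro i
    induction i with
    | zero => exact fun _ => ⟨0, 0, 0, A.zero_mem, by simp, by simp⟩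
    | succ i ih =>
      intro hi
      obtain ⟨s, e, a, ha, hxi, hpar⟩ := ih (by omega)
      obtain ⟨c, b, hb, hstep, hc⟩ := tRem_step A (hcirc i (by omega))
      obtain ⟨k, hk⟩ := hpar
      rcases hc with rfl | rfl | rfl
      · refine ⟨s, e - 1, (1/2) * a + b,
          A.add_mem (A.mul_mem (by simpa [div_eq_mul_inv] using A.inv_mem h2A) ha) hb, ?_, ?_⟩
        · have he : (2:ℝ)^(e-1) = 2^e / 2 := by
            rw [zpow_sub₀ (by norm_num : (2:ℝ) ≠ 0)]; norm_num
          rw [hstep, hxi, he]; ring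
        · exact ⟨k - 1, by push_cast; omega⟩
      · refine ⟨s, e + 1, 2 * a + b, A.add_mem (A.mul_mem h2A ha) hb, ?_, ?_⟩
        · have he : (2:ℝ)^(e+1) = 2^e * 2 := by
            rw [zpow_add₀ (by norm_num : (2:ℝ) ≠ 0)]; norm_num
          rw [hstep, hxi, he]; ring
        · exact ⟨k, by push_cast; omega⟩
      · refine ⟨s + 1, e, -a + b, A.add_mem (A.neg_mem ha) hb, ?_, ?_⟩
        · rw [hstep, hxi, pow_succ]; ring
        · exact ⟨k, by push_cast; omega⟩
  obtain ⟨s, e, a, ha, hx, hpar⟩ := key n le_rfl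
  rw [hclose] at hx
  have hkey : ((-1:ℝ)^s * 2^e - 1) * x 0 = -a := by
    nlinarith [hx]
  by_cases hcz : ((-1:ℝ)^s * 2^e - 1) = 0
  · -- then (-1)^s * 2^e = 1, forcing s even and e = 0
    have h1 : (-1:ℝ)^s * 2^e = 1 := by linarith
    have hepos : (0:ℝ) < 2^e := zpow_pos (by norm_num) e
    rcases Nat.even_or_odd s with hs | hs
    · rw [hs.neg_one_pow, one_mul] at h1
      have he0 : e = 0 := by
        by_contra h
        rcases lt_or_gt_of_ne h with hlt | hgt
        · have : (2:ℝ)^e < 2^(0:ℤ) := zpow_lt_zpow_right₀ (by norm_num) hlt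
          rw [zpow_zero] at this; linarith
        · have : (2:ℝ)^(0:ℤ) < 2^e := zpow_lt_zpow_right₀ (by norm_num) hgt
          rw [zpow_zero] at this; linarith
      obtain ⟨m, hm⟩ := hs
      obtain ⟨k, hk⟩ := hpar
      obtain ⟨j, hj⟩ := hodd
      omega
    · rw [hs.neg_one_pow] at h1
      nlinarith
  · -- then x 0 ∈ A, contradiction
    have hmem : ((-1:ℝ)^s * 2^e - 1) ∈ A :=
      A.sub_mem (A.mul_mem (A.pow_mem (A.neg_mem A.one_mem) s) (A.zpow_mem h2A e)) A.one_mem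
    have : x 0 = -a / ((-1:ℝ)^s * 2^e - 1) := by
      field_simp at hkey ⊢; linarith
    exact hx0 (this ▸ A.div_mem (A.neg_mem ha) hmem)
end

section
/- Let Γ be the hypergraph of equilateral triangles in ℝ³ (triples of points forming an equilateral triangle). Let F ⊊ ℝ be a real closed subfield and A = F³. Then the remainder graph Γ_A on ℝ³ \ A contains a triangle (three pairwise adjacent vertices). -/
/-- A subfield of ℝ is real closed if every nonnegative element has a square root in it
and every polynomial of odd degree with coefficients in it has a root in it. -/
def IsRealClosedSubfield (F : Subfield ℝ) : Prop :=
  (∀ x : ℝ, x ∈ F → 0 ≤ x → ∃ y ∈ F, y ^ 2 = x) ∧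
  ∀ p : Polynomial ℝ, (∀ n, p.coeff n ∈ F) → Odd p.natDegree →
    ∃ x ∈ F, Polynomial.eval x p = 0

/-- The hypergraph of equilateral triangles in ℝ³. -/
def eqEdge (x y z : EuclideanSpace ℝ (Fin 3)) : Prop :=
  x ≠ y ∧ x ≠ z ∧ y ≠ z ∧ dist x y = dist y z ∧ dist y z = dist x z

/-- The remainder graph of the equilateral-triangle hypergraph over `A`. -/
def eqRemAdj (A : Set (EuclideanSpace ℝ (Fin 3))) (x y : EuclideanSpace ℝ (Fin 3)) : Prop :=
  x ∉ A ∧ y ∉ A ∧ x ≠ y ∧ ∃ z ∈ A, eqEdge x y z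

/-- If `F ⊊ ℝ` is a real closed subfield and `A = F³`, then the remainder graph of the
equilateral-triangle hypergraph on `ℝ³ \ A` contains a triangle. -/
theorem stmt2 (F : Subfield ℝ) (hF : IsRealClosedSubfield F)
    (hne : (F : Set ℝ) ≠ Set.univ) :
    ∃ x y z : EuclideanSpace ℝ (Fin 3),
      eqRemAdj {p | ∀ i, p i ∈ F} x y ∧
      eqRemAdj {p | ∀ i, p i ∈ F} y z ∧
      eqRemAdj {p | ∀ i, p i ∈ F} x z := by
  -- get ε > 0 with ε ∉ F
  obtain ⟨a, ha⟩ : ∃ a : ℝ, a ∉ F := by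
    by_contra h
    push_neg at h
    exact hne (Set.eq_univ_of_forall h)
  set ε : ℝ := |a| with hεdef
  have hεF : ε ∉ F := by
    intro h
    rcases abs_choice a with h' | h'
    · exact ha (h' ▸ h)
    · have := F.neg_mem h
      rw [hεdef, h', neg_neg] at this
      exact ha this
  have hε0 : ε ≠ 0 := by
    intro h
    apply hεF
    rw [h]; exact F.zero_mem
  have hεpos : 0 < ε := lt_of_le_of_ne (abs_nonneg a) (Ne.symm hε0)
  -- key: ε² cannot be in F
  have hsq : ε ^ 2 ∉ F := by
    intro h
    obtain ⟨y, hyF, hy⟩ := hF.1 _ h (by positivity)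
    have : (y - ε) * (y + ε) = 0 := by nlinarith
    rcases mul_eq_zero.mp this with h' | h'
    · exact hεF (by have : ε = y := by linarith
                    exact this ▸ hyF)
    · exact hεF (by have : ε = -y := by linarith
                    exact this ▸ F.neg_mem hyF)
  set c : ℝ := ε / Real.sqrt 2 with hc
  have h2 : (0:ℝ) < Real.sqrt 2 := Real.sqrt_pos.mpr (by norm_num)
  have hc0 : c ≠ 0 := by
    simp [hc, div_eq_zero_iff, hε0, ne_of_gt h2]
  have hcsq : 2 * (c * c) = ε ^ 2 := by
    have : Real.sqrt 2 * Real.sqrt 2 = 2 := Real.mul_self_sqrt (by norm_num)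
    rw [hc, div_mul_div_comm, this]
    ring
  have hcF : c ∉ F := by
    intro h
    apply hsq
    rw [← hcsq]
    have h2F : (2:ℝ) ∈ F := by
      have := F.add_mem F.one_mem F.one_mem
      norm_num at this
      norm_num
    exact F.mul_mem h2F (F.mul_mem h h)
  -- the points
  set x : EuclideanSpace ℝ (Fin 3) := !₂[c, c, 0] with hx
  set y : EuclideanSpace ℝ (Fin 3) := !₂[c, 0, c] with hy
  set z : EuclideanSpace ℝ (Fin 3) := !₂[0, c, c] with hz
  set w : EuclideanSpace ℝ (Fin 3) := !₂[0, 0, 0] with hw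
  have hwA : w ∈ {p : EuclideanSpace ℝ (Fin 3) | ∀ i, p i ∈ F} := by
    intro i
    fin_cases i <;> simp [hw] <;> exact F.zero_mem
  have hxA : x ∉ {p : EuclideanSpace ℝ (Fin 3) | ∀ i, p i ∈ F} := by
    intro h; exact hcF (by simpa [hx] using h 0)
  have hyA : y ∉ {p : EuclideanSpace ℝ (Fin 3) | ∀ i, p i ∈ F} := by
    intro h; exact hcF (by simpa [hy] using h 0)
  have hzA : z ∉ {p : EuclideanSpace ℝ (Fin 3) | ∀ i, p i ∈ F} := by
    intro h; exact hcF (by simpa [hz] using h 1)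
  have hd : ∀ p q : EuclideanSpace ℝ (Fin 3),
      dist p q = Real.sqrt ((p 0 - q 0)^2 + (p 1 - q 1)^2 + (p 2 - q 2)^2) := by
    intro p q
    rw [EuclideanSpace.dist_eq]
    congr 1
    rw [Fin.sum_univ_three]
    norm_num [Real.dist_eq, sq_abs]
  have hxy : dist x y = Real.sqrt (2 * (c * c)) := by
    rw [hd]; congr 1; simp only [hx, hy, Matrix.cons_val_zero, Matrix.cons_val_one, Matrix.head_cons, Matrix.cons_val_two, Matrix.tail_cons]; ring
  have hyz : dist y z = Real.sqrt (2 * (c * c)) := by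
    rw [hd]; congr 1; simp only [hy, hz, Matrix.cons_val_zero, Matrix.cons_val_one, Matrix.head_cons, Matrix.cons_val_two, Matrix.tail_cons]; ring
  have hxz : dist x z = Real.sqrt (2 * (c * c)) := by
    rw [hd]; congr 1; simp only [hx, hz, Matrix.cons_val_zero, Matrix.cons_val_one, Matrix.head_cons, Matrix.cons_val_two, Matrix.tail_cons]; ring
  have hxw : dist x w = Real.sqrt (2 * (c * c)) := by
    rw [hd]; congr 1; simp only [hx, hw, Matrix.cons_val_zero, Matrix.cons_val_one, Matrix.head_cons, Matrix.cons_val_two, Matrix.tail_cons]; ring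
  have hyw : dist y w = Real.sqrt (2 * (c * c)) := by
    rw [hd]; congr 1; simp only [hy, hw, Matrix.cons_val_zero, Matrix.cons_val_one, Matrix.head_cons, Matrix.cons_val_two, Matrix.tail_cons]; ring
  have hzw : dist z w = Real.sqrt (2 * (c * c)) := by
    rw [hd]; congr 1; simp only [hz, hw, Matrix.cons_val_zero, Matrix.cons_val_one, Matrix.head_cons, Matrix.cons_val_two, Matrix.tail_cons]; ring
  have hxyne : x ≠ y := by
    intro h
    have := congrArg (fun v : EuclideanSpace ℝ (Fin 3) => v 1) h
    simp [hx, hy] at this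
    exact hc0 this
  have hyzne : y ≠ z := by
    intro h
    have := congrArg (fun v : EuclideanSpace ℝ (Fin 3) => v 0) h
    simp [hy, hz] at this
    exact hc0 this
  have hxzne : x ≠ z := by
    intro h
    have := congrArg (fun v : EuclideanSpace ℝ (Fin 3) => v 0) h
    simp [hx, hz] at this
    exact hc0 this
  have hxwne : x ≠ w := by
    intro h
    have := congrArg (fun v : EuclideanSpace ℝ (Fin 3) => v 0) h
    simp [hx, hw] at this
    exact hc0 this
  have hywne : y ≠ w := by
    intro h
    have := congrArg (fun v : EuclideanSpace ℝ (Fin 3) => v 0) h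
    simp [hy, hw] at this
    exact hc0 this
  have hzwne : z ≠ w := by
    intro h
    have := congrArg (fun v : EuclideanSpace ℝ (Fin 3) => v 1) h
    simp [hz, hw] at this
    exact hc0 this
  refine ⟨x, y, z,
    ⟨hxA, hyA, hxyne, w, hwA, hxyne, hxwne, hywne, ?_, ?_⟩,
    ⟨hyA, hzA, hyzne, w, hwA, hyzne, hywne, hzwne, ?_, ?_⟩,
    ⟨hxA, hzA, hxzne, w, hwA, hxzne, hxwne, hzwne, ?_, ?_⟩⟩ <;>
  simp only [hxy, hyz, hxz, hxw, hyw, hzw]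
end

section
/- Let Γ be the hypergraph of isosceles triangles in ℝ² (triples of pairwise distinct points forming an isosceles triangle). Let F ⊊ ℝ be a real closed subfield and A = F². Then the remainder graph Γ_A on ℝ² \ A contains a clique of cardinality continuum. Specifically, for any ε > 0 with ε ∉ F and any z ∈ A, the circle of radius ε centered at z is disjoint from A and is a clique in Γ_A. -/
/-- The hypergraph of isosceles triangles in ℝ²: triples of pairwise distinct points
with at least two of the three pairwise distances equal. -/
def isoEdge (x y z : EuclideanSpace ℝ (Fin 2)) : Prop :=
  x ≠ y ∧ x ≠ z ∧ y ≠ z ∧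
    (dist x y = dist x z ∨ dist x y = dist y z ∨ dist x z = dist y z)

/-- The remainder graph of the isosceles-triangle hypergraph over `A`. -/
def isoRemAdj (A : Set (EuclideanSpace ℝ (Fin 2))) (x y : EuclideanSpace ℝ (Fin 2)) : Prop :=
  x ∉ A ∧ y ∉ A ∧ x ≠ y ∧ ∃ z ∈ A, isoEdge x y z

lemma dist_sq_two (x z : EuclideanSpace ℝ (Fin 2)) :
    dist x z ^ 2 = (x 0 - z 0) ^ 2 + (x 1 - z 1) ^ 2 := by
  rw [EuclideanSpace.dist_eq, Real.sq_sqrt (by positivity)]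
  simp [Fin.sum_univ_two, Real.dist_eq, sq_abs]

/-- If `F ⊊ ℝ` is a real closed subfield and `A = F²`, then the remainder graph of the
isosceles-triangle hypergraph contains a clique of size continuum: for any `ε > 0` with
`ε ∉ F` and any `z ∈ A`, the sphere of radius `ε` around `z` is disjoint from `A`,
is a clique in the remainder graph, and has cardinality continuum. -/
theorem stmt3 (F : Subfield ℝ) (hF : IsRealClosedSubfield F)
    (hne : (F : Set ℝ) ≠ Set.univ)
    (ε : ℝ) (hε : 0 < ε) (hεF : ε ∉ F)
    (z : EuclideanSpace ℝ (Fin 2)) (hz : z ∈ {p : EuclideanSpace ℝ (Fin 2) | ∀ i, p i ∈ F}) :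
    (Metric.sphere z ε ∩ {p : EuclideanSpace ℝ (Fin 2) | ∀ i, p i ∈ F} = ∅) ∧
    (∀ x ∈ Metric.sphere z ε, ∀ y ∈ Metric.sphere z ε, x ≠ y →
      isoRemAdj {p | ∀ i, p i ∈ F} x y) ∧
    Cardinal.mk (Metric.sphere z ε) = Cardinal.continuum := by
  have hdisj : Metric.sphere z ε ∩ {p : EuclideanSpace ℝ (Fin 2) | ∀ i, p i ∈ F} = ∅ := by
    ext x
    simp only [Set.mem_inter_iff, Set.mem_setOf_eq, Set.mem_empty_iff_false, iff_false,
      not_and, Metric.mem_sphere]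
    intro hxz hxF
    have hsq : ε ^ 2 = (x 0 - z 0) ^ 2 + (x 1 - z 1) ^ 2 := by
      rw [← hxz]; exact dist_sq_two x z
    have hmem : ε ^ 2 ∈ F := by
      rw [hsq]
      exact F.add_mem (F.pow_mem (F.sub_mem (hxF 0) (hz 0)) 2)
        (F.pow_mem (F.sub_mem (hxF 1) (hz 1)) 2)
    obtain ⟨y, hyF, hy⟩ := hF.1 _ hmem (sq_nonneg ε)
    rcases sq_eq_sq_iff_eq_or_eq_neg.mp hy with h | h
    · exact hεF (h ▸ hyF)
    · exact hεF (by rw [show ε = -y by linarith]; exact F.neg_mem hyF)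
  refine ⟨hdisj, ?_, ?_⟩
  · intro x hx y hy hxy
    have hxA : x ∉ {p : EuclideanSpace ℝ (Fin 2) | ∀ i, p i ∈ F} := by
      intro h; exact absurd (Set.mem_inter hx h) (by rw [hdisj]; simp)
    have hyA : y ∉ {p : EuclideanSpace ℝ (Fin 2) | ∀ i, p i ∈ F} := by
      intro h; exact absurd (Set.mem_inter hy h) (by rw [hdisj]; simp)
    have hxz : x ≠ z := by
      intro h; rw [Metric.mem_sphere, h, dist_self] at hx; linarith
    have hyz : y ≠ z := by
      intro h; rw [Metric.mem_sphere, h, dist_self] at hy; linarith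
    exact ⟨hxA, hyA, hxy, z, hz, hxy, hxz, hyz,
      Or.inr (Or.inr (by rw [Metric.mem_sphere] at hx hy; rw [hx, hy]))⟩
  · -- cardinality
    apply le_antisymm
    · calc Cardinal.mk (Metric.sphere z ε)
          ≤ Cardinal.mk (EuclideanSpace ℝ (Fin 2)) := Cardinal.mk_set_le _
        _ ≤ Cardinal.mk (ℝ × ℝ) := by
            apply Cardinal.mk_le_of_injective (f := fun p => (p 0, p 1))
            intro a b h
            simp only [Prod.mk.injEq] at h
            ext i
            fin_cases i <;> simp [h.1, h.2]
        _ = Cardinal.continuum := by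
            rw [Cardinal.mk_prod, Cardinal.mk_real]
            simp [Cardinal.lift_id, Cardinal.mul_eq_self Cardinal.aleph0_le_continuum]
    · rw [← Cardinal.mk_Ioo_real (show (0:ℝ) < 1 by norm_num)]
      have hmem : ∀ t : Set.Ioo (0:ℝ) 1,
          (WithLp.equiv 2 (Fin 2 → ℝ)).symm
            ![z 0 + ε * t, z 1 + ε * Real.sqrt (1 - (t:ℝ) ^ 2)] ∈ Metric.sphere z ε := by
        rintro ⟨t, ht0, ht1⟩
        have h1 : (0:ℝ) ≤ 1 - t ^ 2 := by nlinarith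
        have hd2 : dist ((WithLp.equiv 2 (Fin 2 → ℝ)).symm
            ![z 0 + ε * t, z 1 + ε * Real.sqrt (1 - t ^ 2)]) z ^ 2 = ε ^ 2 := by
          rw [EuclideanSpace.dist_eq, Real.sq_sqrt (by positivity)]
          simp only [Fin.sum_univ_two, WithLp.equiv_symm_apply, PiLp.toLp_apply, Matrix.cons_val_zero,
            Matrix.cons_val_one, Matrix.head_cons, Real.dist_eq, sq_abs]
          ring_nf
          rw [Real.sq_sqrt h1]
          ring
        rw [Metric.mem_sphere, ← Real.sqrt_sq dist_nonneg, hd2, Real.sqrt_sq hε.le]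
      apply Cardinal.mk_le_of_injective
        (f := fun t : Set.Ioo (0:ℝ) 1 =>
          (⟨(WithLp.equiv 2 (Fin 2 → ℝ)).symm
              ![z 0 + ε * t, z 1 + ε * Real.sqrt (1 - (t:ℝ) ^ 2)], hmem t⟩ :
            Metric.sphere z ε))
      intro a b h
      have h0 := congrArg (fun p : Metric.sphere z ε => (p : EuclideanSpace ℝ (Fin 2)) 0) h
      simp only [WithLp.equiv_symm_apply, PiLp.toLp_apply, Matrix.cons_val_zero] at h0
      have : (a : ℝ) = b := by
        have := mul_left_cancel₀ hε.ne' (by linarith : ε * (a:ℝ) = ε * b)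
        exact this
      exact Subtype.ext this
end

section
/- Let X be an abelian group, let Γ = ⋃_{i<n} Γ_i be a finite union of slim linear hypergraphs of arity three on X generated by injective homomorphisms g_j^i (j < 3), and let A ⊆ X be a Γ-closed subgroup. Then the map sending x ∈ X \ A to its coset modulo A is a graph homomorphism from the remainder graph Γ_A to a locally finite graph on the set of nontrivial cosets; for countable unions the target graph is locally countable. -/
variable {X : Type*} [AddCommGroup X]

/-- The hyperedges of the slim linear hypergraph generated by `g 0, g 1, g 2`:
pairwise distinct triples satisfying `g 0 x₀ + g 1 x₁ + g 2 x₂ = 0` in some ordering. -/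
def SlimEdge (g : Fin 3 → X →+ X) (x₀ x₁ x₂ : X) : Prop :=
  x₀ ≠ x₁ ∧ x₀ ≠ x₂ ∧ x₁ ≠ x₂ ∧
    ∃ σ : Equiv.Perm (Fin 3),
      g 0 (![x₀, x₁, x₂] (σ 0)) + g 1 (![x₀, x₁, x₂] (σ 1)) + g 2 (![x₀, x₁, x₂] (σ 2)) = 0

/-- The triple of homomorphisms generates a slim linear hypergraph: all of them and
their pairwise sums are injective. -/
def IsSlim (g : Fin 3 → X →+ X) : Prop :=
  (∀ j, Function.Injective (g j)) ∧
  ∀ j k : Fin 3, j ≠ k → Function.Injective fun x => g j x + g k x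

/-- Hyperedge of a union of slim linear hypergraphs. -/
def GEdge {ι : Type*} (g : ι → Fin 3 → X →+ X) (x₀ x₁ x₂ : X) : Prop :=
  ∃ i, SlimEdge (g i) x₀ x₁ x₂

/-- `A` is Γ-closed for the union Γ of the slim hypergraphs generated by `g i`:
a subgroup closed under the generating homomorphisms, their inverses, and the
inverses of their pairwise sums. -/
def GammaClosed {ι : Type*} (g : ι → Fin 3 → X →+ X) (A : Set X) : Prop :=
  (0 : X) ∈ A ∧ (∀ x ∈ A, ∀ y ∈ A, x - y ∈ A) ∧
  (∀ i j, ∀ x ∈ A, g i j x ∈ A) ∧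
  (∀ i j, ∀ x : X, g i j x ∈ A → x ∈ A) ∧
  (∀ i, ∀ j k : Fin 3, j ≠ k → ∀ x : X, g i j x + g i k x ∈ A → x ∈ A)

/-- The remainder graph of the union hypergraph over `A`: distinct points outside `A`
connected if some `z ∈ A` completes them to a hyperedge. -/
def RemAdj {ι : Type*} (g : ι → Fin 3 → X →+ X) (A : Set X) (x y : X) : Prop :=
  x ∉ A ∧ y ∉ A ∧ x ≠ y ∧ ∃ i, ∃ z ∈ A, SlimEdge (g i) x y z

/-- The adjacency of the quotient graph Θ on cosets of `A`. -/
def ThetaAdj {ι : Type*} (g : ι → Fin 3 → X →+ X) (A : AddSubgroup X)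
    (c d : X ⧸ A) : Prop :=
  c ≠ d ∧ ∃ x y : X, (QuotientAddGroup.mk x : X ⧸ A) = c ∧
    (QuotientAddGroup.mk y : X ⧸ A) = d ∧ RemAdj g (A : Set X) x y

lemma slim_rearrange (g : Fin 3 → X →+ X) {x y z : X} (σ : Equiv.Perm (Fin 3))
    (h : g 0 (![x,y,z] (σ 0)) + g 1 (![x,y,z] (σ 1)) + g 2 (![x,y,z] (σ 2)) = 0) :
    ∃ a b c : Fin 3, a ≠ b ∧ g a x + g b y + g c z = 0 := by
  refine ⟨σ⁻¹ 0, σ⁻¹ 1, σ⁻¹ 2, fun hab => ?_, ?_⟩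
  · exact absurd (σ⁻¹.injective hab) (by decide)
  · have h2 : ∑ j : Fin 3, g (σ⁻¹ j) (![x,y,z] j)
        = ∑ j : Fin 3, g j (![x,y,z] (σ j)) := by
      rw [← Equiv.sum_comp σ (fun j => g (σ⁻¹ j) (![x,y,z] j))]
      simp
    simp only [Fin.sum_univ_three] at h2
    simp only [Matrix.cons_val_zero, Matrix.cons_val_one, Matrix.head_cons,
      Matrix.cons_val_two, Matrix.tail_cons] at h2 h
    rw [h2, h]

/-- For a countable (resp. finite) union Γ of slim linear hypergraphs and a Γ-closed
subgroup `A`, the quotient map is a graph homomorphism from the remainder graph `Γ_A`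
to the quotient graph on cosets, which is locally countable (resp. locally finite). -/
theorem stmt4 {ι : Type*} [Countable ι] (g : ι → Fin 3 → X →+ X)
    (hg : ∀ i, IsSlim (g i)) (A : AddSubgroup X) (hA : GammaClosed g (A : Set X)) :
    (∀ x y : X, RemAdj g (A : Set X) x y →
      (QuotientAddGroup.mk x : X ⧸ A) ≠ QuotientAddGroup.mk y ∧
      ThetaAdj g A (QuotientAddGroup.mk x) (QuotientAddGroup.mk y)) ∧
    (∀ c : X ⧸ A, {d | ThetaAdj g A c d}.Countable) ∧
    (Finite ι → ∀ c : X ⧸ A, {d | ThetaAdj g A c d}.Finite) := by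
  obtain ⟨h0, hsub, hfwd, hinv, hsum⟩ := hA
  -- Part 1: the quotient map is a graph homomorphism.
  have part1 : ∀ x y : X, RemAdj g (A : Set X) x y →
      (QuotientAddGroup.mk x : X ⧸ A) ≠ QuotientAddGroup.mk y ∧
      ThetaAdj g A (QuotientAddGroup.mk x) (QuotientAddGroup.mk y) := by
    intro x y hxy
    obtain ⟨hx, hy, hne, i, z, hz, _, _, _, σ, heq⟩ := hxy
    obtain ⟨a, b, c, hab, habc⟩ := slim_rearrange (g i) σ heq
    have hne' : (QuotientAddGroup.mk x : X ⧸ A) ≠ QuotientAddGroup.mk y := by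
      intro h
      have hyx : y - x ∈ A := by
        have := (QuotientAddGroup.eq (s := A) (a := x) (b := y)).mp h
        simpa [sub_eq_neg_add] using this
      have h1 : g i a x + g i b y ∈ (A : Set X) := by
        rw [eq_neg_of_add_eq_zero_left habc]
        have : g i c z ∈ (A : Set X) := hfwd i c z hz
        simpa using (hsub 0 h0 _ this)
      have h2 : g i b (y - x) ∈ (A : Set X) := hfwd i b _ hyx
      have h3 : g i a x + g i b x ∈ (A : Set X) := by
        have : g i a x + g i b x = (g i a x + g i b y) - g i b (y - x) := by
          simp [map_sub]; abel
        rw [this]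
        exact hsub _ h1 _ h2
      exact hx (hsum i a b hab x h3)
    exact ⟨hne', hne', x, y, rfl, rfl, hx, hy, hne, i, z, hz, hne, ‹x ≠ z›, ‹y ≠ z›, σ, heq⟩
  refine ⟨part1, ?_, ?_⟩
  -- The neighbor sets, indexed by (i, a, b).
  all_goals {
    have hcover : ∀ c : X ⧸ A, {d | ThetaAdj g A c d} ⊆
        ⋃ p : ι × Fin 3 × Fin 3, {d : X ⧸ A | ∃ x y : X,
          (QuotientAddGroup.mk x : X ⧸ A) = c ∧ (QuotientAddGroup.mk y : X ⧸ A) = d ∧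
          g p.1 p.2.1 x + g p.1 p.2.2 y ∈ (A : Set X)} := by
      intro c d hd
      obtain ⟨hne, x, y, hxc, hyd, _, _, _, i, z, hz, _, _, _, σ, heq⟩ := hd
      obtain ⟨a, b, cc, hab, habc⟩ := slim_rearrange (g i) σ heq
      refine Set.mem_iUnion.mpr ⟨(i, a, b), x, y, hxc, hyd, ?_⟩
      rw [eq_neg_of_add_eq_zero_left habc]
      have : g i cc z ∈ (A : Set X) := hfwd i cc z hz
      simpa using (hsub 0 h0 _ this)
    have hsubsing : ∀ (c : X ⧸ A) (p : ι × Fin 3 × Fin 3),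
        {d : X ⧸ A | ∃ x y : X,
          (QuotientAddGroup.mk x : X ⧸ A) = c ∧ (QuotientAddGroup.mk y : X ⧸ A) = d ∧
          g p.1 p.2.1 x + g p.1 p.2.2 y ∈ (A : Set X)}.Subsingleton := by
      rintro c ⟨i, a, b⟩ d ⟨x, y, hxc, hyd, hxy⟩ d' ⟨x', y', hx'c, hy'd', hxy'⟩
      have hxx' : x' - x ∈ A := by
        have := (QuotientAddGroup.eq (s := A) (a := x) (b := x')).mp (hxc.trans hx'c.symm)
        simpa [sub_eq_neg_add] using this
      have h1 : g i a (x' - x) ∈ (A : Set X) := hfwd i a _ hxx'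
      have h2 : g i b (y' - y) ∈ (A : Set X) := by
        have : g i b (y' - y) = (g i a x' + g i b y') - (g i a x + g i b y)
            - g i a (x' - x) := by
          simp [map_sub]; abel
        rw [this]
        exact hsub _ (hsub _ hxy' _ hxy) _ h1
      have : y' - y ∈ A := hinv i b _ h2
      rw [← hyd, ← hy'd']
      exact (QuotientAddGroup.eq (s := A) (a := y) (b := y')).mpr
        (by simpa [sub_eq_neg_add] using this)
    first
    | exact fun c => Set.Countable.mono (hcover c)
        (Set.countable_iUnion fun p => ((hsubsing c p).countable))
    | exact fun _ c => Set.Finite.subset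
        (Set.finite_iUnion fun p => ((hsubsing c p).finite)) (hcover c)
  }
end

section
/- Let X be an abelian group, Γ a 3-uniform hypergraph on X that is a countable union of slim linear hypergraphs, and A ⊆ X a countable Γ-closed set. Then the chromatic number of the remainder graph Γ_A is countable, i.e., there is a function c : (X \ A) → ℕ such that no two Γ_A-adjacent points receive the same color. -/
theorem myExistsInjOn {α : Type*} {s : Set α} (hs : s.Countable) :
    ∃ f : α → ℕ, Set.InjOn f s := by
  classical
  have : Countable ↥s := hs.to_subtype
  obtain ⟨f, hf⟩ := Countable.exists_injective_nat ↥s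
  refine ⟨fun a => if h : a ∈ s then f ⟨a, h⟩ else 0, ?_⟩
  intro a ha b hb hab
  simp only [dif_pos ha, dif_pos hb] at hab
  exact congrArg Subtype.val (hf hab)

theorem myCountableReach {Q : Type*} {R : Q → Q → Prop}
    (h : ∀ q, {q' | R q q'}.Countable) (q : Q) :
    {q' | Relation.ReflTransGen R q q'}.Countable := by
  classical
  let f : ℕ → Set Q := fun n => Nat.rec {q} (fun _ s => s ∪ ⋃ p ∈ s, {q' | R p q'}) n
  have hf : ∀ n, (f n).Countable := by
    intro n
    induction n with
    | zero => exact Set.countable_singleton q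
    | succ n ih => exact ih.union (ih.biUnion fun p _ => h p)
  have hsub : {q' | Relation.ReflTransGen R q q'} ⊆ ⋃ n, f n := by
    intro q' hq'
    induction hq' with
    | refl => exact Set.mem_iUnion.2 ⟨0, rfl⟩
    | tail h1 h2 ih =>
      obtain ⟨n, hn⟩ := Set.mem_iUnion.1 ih
      exact Set.mem_iUnion.2 ⟨n + 1, Or.inr (Set.mem_biUnion hn h2)⟩
  exact (Set.countable_iUnion hf).mono hsub

theorem myCountableChromatic {Q : Type*} (R : Q → Q → Prop) (hsym : Symmetric R)
    (hloc : ∀ q, {q' | R q q'}.Countable) :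
    ∃ c : Q → ℕ, ∀ q q', R q q' → q ≠ q' → c q ≠ c q' := by
  classical
  have htsymm : Symmetric (Relation.ReflTransGen R) := by
    haveI : Std.Symm R := ⟨fun a b h => hsym h⟩
    exact fun a b h => Std.Symm.symm a b h
  have hcomp : ∀ q, {q' | Relation.ReflTransGen R q q'}.Countable := myCountableReach hloc
  let s : Setoid Q := ⟨Relation.ReflTransGen R,
    ⟨fun _ => Relation.ReflTransGen.refl, fun h => htsymm h, fun h h' => h.trans h'⟩⟩
  let b : Q → Q := fun q => (Quotient.mk s q).out
  have hbrel : ∀ q, Relation.ReflTransGen R (b q) q :=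
    fun q => Quotient.exact (Quotient.out_eq (Quotient.mk s q))
  have hbeq : ∀ {q q'}, Relation.ReflTransGen R q q' → b q = b q' :=
    fun h => congrArg Quotient.out (Quotient.sound h)
  choose F hF using fun q => myExistsInjOn (hcomp q)
  refine ⟨fun q => F (b q) q, ?_⟩
  intro q q' hR hne hc
  have h1 : Relation.ReflTransGen R q q' := Relation.ReflTransGen.single hR
  have hb : b q = b q' := hbeq h1
  have hm : q ∈ {p | Relation.ReflTransGen R (b q) p} := hbrel q
  have hm' : q' ∈ {p | Relation.ReflTransGen R (b q) p} := (hbrel q).trans h1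
  have hc' : F (b q) q = F (b q') q' := hc
  exact hne (hF (b q) hm hm' (by rw [hc', hb]))


variable {X : Type*} [AddCommGroup X]

/-- For a countable union Γ of slim linear hypergraphs and a countable Γ-closed set `A`,
the remainder graph `Γ_A` has countable chromatic number. -/
theorem stmt6 (g : ℕ → Fin 3 → X →+ X) (hg : ∀ i, IsSlim (g i))
    (A : Set X) (hA : GammaClosed g A) (hAc : A.Countable) :
    ∃ c : X → ℕ, ∀ x y : X, RemAdj g A x y → c x ≠ c y := by
  classical
  obtain ⟨h0, hsub, hmap, hinv, hsumi⟩ := hA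
  have hneg : ∀ x ∈ A, -x ∈ A := fun x hx => by simpa using hsub 0 h0 x hx
  have hadd : ∀ x ∈ A, ∀ y ∈ A, x + y ∈ A := fun x hx y hy => by
    simpa using hsub x hx (-y) (hneg y hy)
  let B : AddSubgroup X :=
    { carrier := A
      zero_mem' := h0
      add_mem' := fun hx hy => hadd _ hx _ hy
      neg_mem' := fun hx => hneg _ hx }
  have hmk : ∀ x y : X, (x : X ⧸ B) = y ↔ x - y ∈ A := fun x y =>
    QuotientAddGroup.eq_iff_sub_mem
  let R : X ⧸ B → X ⧸ B → Prop := fun q q' =>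
    ∃ x y : X, (x : X ⧸ B) = q ∧ (y : X ⧸ B) = q' ∧
      ∃ i, ∃ j k : Fin 3, j ≠ k ∧ g i j x + g i k y ∈ A
  have hsym : Symmetric R := by
    rintro q q' ⟨x, y, hx, hy, i, j, k, hjk, hxy⟩
    exact ⟨y, x, hy, hx, i, k, j, hjk.symm, by rwa [add_comm]⟩
  have hloc : ∀ q, {q' | R q q'}.Countable := by
    intro q
    have hsing : ∀ t : ℕ × Fin 3 × Fin 3,
        {q' | ∃ x y : X, (x : X ⧸ B) = q ∧ (y : X ⧸ B) = q' ∧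
          g t.1 t.2.1 x + g t.1 t.2.2 y ∈ A}.Subsingleton := by
      rintro ⟨i, j, k⟩ p hp p' hp'
      obtain ⟨x, y, hx, hy, hxy⟩ := hp
      obtain ⟨x', y', hx', hy', hxy'⟩ := hp'
      have hxx : x - x' ∈ A := (hmk x x').1 (hx.trans hx'.symm)
      have h1 : g i j (x - x') ∈ A := hmap i j _ hxx
      have key : g i k y - g i k y' =
          (g i j x + g i k y) - (g i j x' + g i k y') - g i j (x - x') := by
        rw [map_sub]; abel
      have h2 : g i k y - g i k y' ∈ A := by
        rw [key]; exact hsub _ (hsub _ hxy _ hxy') _ h1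
      have h3 : y - y' ∈ A := hinv i k _ (by rwa [← map_sub] at h2)
      rw [← hy, ← hy']
      exact ((hmk y y').2 h3)
    have hss : {q' | R q q'} ⊆ ⋃ t : ℕ × Fin 3 × Fin 3,
        {q' | ∃ x y : X, (x : X ⧸ B) = q ∧ (y : X ⧸ B) = q' ∧
          g t.1 t.2.1 x + g t.1 t.2.2 y ∈ A} := by
      rintro p ⟨x, y, hx, hy, i, j, k, _, hxy⟩
      exact Set.mem_iUnion.2 ⟨(i, j, k), x, y, hx, hy, hxy⟩
    exact (Set.countable_iUnion fun t => (hsing t).countable).mono hss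
  obtain ⟨c', hc'⟩ := myCountableChromatic R hsym hloc
  refine ⟨fun x => c' (x : X ⧸ B), ?_⟩
  rintro x y ⟨hx, hy, hxy, i, z, hz, hne01, hne02, hne12, σ, heq⟩
  -- rearrange the sum according to the permutation
  have hsum : ∑ t : Fin 3, g i t (![x, y, z] (σ t)) = 0 := by
    rw [Fin.sum_univ_three]; exact heq
  have hsum2 : g i (σ⁻¹ 0) x + g i (σ⁻¹ 1) y + g i (σ⁻¹ 2) z = 0 := by
    have h2 : ∑ s : Fin 3, g i (σ⁻¹ s) (![x, y, z] s) = 0 := by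
      rw [← Equiv.sum_comp σ (fun s => g i (σ⁻¹ s) (![x, y, z] s))]
      simpa [Equiv.Perm.inv_def, Equiv.symm_apply_apply] using hsum
    rw [Fin.sum_univ_three] at h2
    simpa using h2
  have hjk : σ⁻¹ 0 ≠ σ⁻¹ 1 := fun h =>
    (by decide : (0 : Fin 3) ≠ 1) (σ⁻¹.injective h)
  have hzA : g i (σ⁻¹ 2) z ∈ A := hmap i _ z hz
  have hstep : g i (σ⁻¹ 0) x + g i (σ⁻¹ 1) y ∈ A := by
    have h3 : g i (σ⁻¹ 0) x + g i (σ⁻¹ 1) y = -(g i (σ⁻¹ 2) z) :=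
      eq_neg_of_add_eq_zero_left hsum2
    rw [h3]; exact hneg _ hzA
  have hR : R (x : X ⧸ B) (y : X ⧸ B) :=
    ⟨x, y, rfl, rfl, i, σ⁻¹ 0, σ⁻¹ 1, hjk, hstep⟩
  have hneq : (x : X ⧸ B) ≠ (y : X ⧸ B) := by
    intro h
    have hxyA : x - y ∈ A := (hmk x y).1 h
    have h4 : g i (σ⁻¹ 1) (x - y) ∈ A := hmap i _ _ hxyA
    have key : g i (σ⁻¹ 0) x + g i (σ⁻¹ 1) x =
        (g i (σ⁻¹ 0) x + g i (σ⁻¹ 1) y) + g i (σ⁻¹ 1) (x - y) := by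
      rw [map_sub]; abel
    have h5 : g i (σ⁻¹ 0) x + g i (σ⁻¹ 1) x ∈ A := by
      rw [key]; exact hadd _ hstep _ h4
    exact hx (hsumi i _ _ hjk x h5)
  exact hc' _ _ hR hneq
end

section
/- The amalgamation of a coherent sequence of colorings is a proper coloring of the hypergraph Γ: no Γ-hyperedge contained in the union of the domains is monochromatic under the amalgamated coloring. -/
variable {X : Type*} [AddCommGroup X]

lemma slimEdge_swap01 {g : Fin 3 → X →+ X} {a b c : X} (h : SlimEdge g a b c) :
    SlimEdge g b a c := by
  obtain ⟨h01, h02, h12, σ, hσ⟩ := h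
  refine ⟨h01.symm, h12, h02, σ.trans (Equiv.swap 0 1), ?_⟩
  have key : ∀ j : Fin 3, ![b, a, c] (Equiv.swap (0 : Fin 3) 1 j) = ![a, b, c] j := by
    intro j; fin_cases j <;> simp [Equiv.swap_apply_of_ne_of_ne]
  simpa only [Equiv.trans_apply, key] using hσ

lemma slimEdge_swap12 {g : Fin 3 → X →+ X} {a b c : X} (h : SlimEdge g a b c) :
    SlimEdge g a c b := by
  obtain ⟨h01, h02, h12, σ, hσ⟩ := h
  refine ⟨h02, h01, h12.symm, σ.trans (Equiv.swap 1 2), ?_⟩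
  have key : ∀ j : Fin 3, ![a, c, b] (Equiv.swap (1 : Fin 3) 2 j) = ![a, b, c] j := by
    intro j; fin_cases j <;> simp [Equiv.swap_apply_of_ne_of_ne]
  simpa only [Equiv.trans_apply, key] using hσ

lemma closure3 {ι : Type*} {g : ι → Fin 3 → X →+ X} {A : Set X} (hA : GammaClosed g A)
    (i : ι) {a b c : X} (hs : SlimEdge (g i) a b c) (ha : a ∈ A) (hb : b ∈ A) : c ∈ A := by
  obtain ⟨-, -, -, σ, hσ⟩ := hs
  obtain ⟨h0A, hsub, hmap, hinv, -⟩ := hA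
  have addmem : ∀ x ∈ A, ∀ y ∈ A, x + y ∈ A := by
    intro x hx y hy
    have := hsub x hx (0 - y) (hsub 0 h0A y hy)
    simpa using this
  set v : Fin 3 → X := ![a, b, c] with hv
  have hvp : ∀ p : Fin 3, σ p ≠ 2 → v (σ p) ∈ A := by
    intro p hp
    have h3 : σ p = 0 ∨ σ p = 1 ∨ σ p = 2 := by omega
    rcases h3 with h | h | h
    · rw [h]; simpa [hv] using ha
    · rw [h]; simpa [hv] using hb
    · exact absurd h hp
  set k : Fin 3 := σ.symm 2 with hk
  have hσk : σ k = 2 := σ.apply_symm_apply 2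
  have hvk : v (σ k) = c := by rw [hσk]; simp [hv]
  have hne : ∀ p : Fin 3, p ≠ k → σ p ≠ 2 := by
    intro p hp h
    exact hp (by rw [hk, ← h, Equiv.symm_apply_apply])
  have hmem : ∀ p : Fin 3, p ≠ k → g i p (v (σ p)) ∈ A :=
    fun p hp => hmap i p _ (hvp p (hne p hp))
  have hk3 : k = 0 ∨ k = 1 ∨ k = 2 := by omega
  have key : g i k c ∈ A := by
    rcases hk3 with h | h | h
    · have h1 := hmem 1 (by rw [h]; decide)
      have h2 := hmem 2 (by rw [h]; decide)
      have : g i k c = 0 - (g i 1 (v (σ 1)) + g i 2 (v (σ 2))) := by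
        rw [← hvk, h, eq_sub_iff_add_eq,
          show (g i 0) (v (σ 0)) + ((g i 1) (v (σ 1)) + (g i 2) (v (σ 2)))
            = (g i 0) (v (σ 0)) + (g i 1) (v (σ 1)) + (g i 2) (v (σ 2)) from by abel]
        exact hσ
      rw [this]; exact hsub 0 h0A _ (addmem _ h1 _ h2)
    · have h1 := hmem 0 (by rw [h]; decide)
      have h2 := hmem 2 (by rw [h]; decide)
      have : g i k c = 0 - (g i 0 (v (σ 0)) + g i 2 (v (σ 2))) := by
        rw [← hvk, h, eq_sub_iff_add_eq,
          show (g i 1) (v (σ 1)) + ((g i 0) (v (σ 0)) + (g i 2) (v (σ 2)))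
            = (g i 0) (v (σ 0)) + (g i 1) (v (σ 1)) + (g i 2) (v (σ 2)) from by abel]
        exact hσ
      rw [this]; exact hsub 0 h0A _ (addmem _ h1 _ h2)
    · have h1 := hmem 0 (by rw [h]; decide)
      have h2 := hmem 1 (by rw [h]; decide)
      have : g i k c = 0 - (g i 0 (v (σ 0)) + g i 1 (v (σ 1))) := by
        rw [← hvk, h, eq_sub_iff_add_eq,
          show (g i 2) (v (σ 2)) + ((g i 0) (v (σ 0)) + (g i 1) (v (σ 1)))
            = (g i 0) (v (σ 0)) + (g i 1) (v (σ 1)) + (g i 2) (v (σ 2)) from by abel]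
        exact hσ
      rw [this]; exact hsub 0 h0A _ (addmem _ h1 _ h2)
  exact hinv i k c key

/-- The amalgamation of a coherent sequence of colorings is a proper Γ-coloring:
given an increasing sequence of Γ-closed sets `A i` along a linear order, proper
Γ-colorings `c i` of each `A i`, proper colorings `d i` of the remainder graphs
`Γ_{⋃_{j<i} A j}` restricted to `A i`, and a least-index function `idx`, the
amalgamated coloring `x ↦ (c (idx x) x, d (idx x) x)` leaves no Γ-hyperedge inside
`⋃ i, A i` monochromatic. -/
theorem stmt7 (g : ℕ → Fin 3 → X →+ X) (hg : ∀ i, IsSlim (g i))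
    {I : Type*} [LinearOrder I] (A : I → Set X) (mono : Monotone A)
    (hA : ∀ i, GammaClosed g (A i))
    (idx : X → I)
    (hidx : ∀ x ∈ ⋃ i, A i, x ∈ A (idx x) ∧ ∀ j, x ∈ A j → idx x ≤ j)
    (c d : I → X → ℕ)
    (hc : ∀ i, ∀ x₀ x₁ x₂, x₀ ∈ A i → x₁ ∈ A i → x₂ ∈ A i → GEdge g x₀ x₁ x₂ →
      ¬(c i x₀ = c i x₁ ∧ c i x₁ = c i x₂))
    (hd : ∀ i, ∀ x y, x ∈ A i → y ∈ A i →
      RemAdj g (⋃ j ∈ {j | j < i}, A j) x y → d i x ≠ d i y) :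
    ∀ x₀ x₁ x₂, x₀ ∈ (⋃ i, A i) → x₁ ∈ (⋃ i, A i) → x₂ ∈ (⋃ i, A i) →
      GEdge g x₀ x₁ x₂ →
      ¬((c (idx x₀) x₀, d (idx x₀) x₀) = (c (idx x₁) x₁, d (idx x₁) x₁) ∧
        (c (idx x₁) x₁, d (idx x₁) x₁) = (c (idx x₂) x₂, d (idx x₂) x₂)) := by
  intro x₀ x₁ x₂ h₀ h₁ h₂ hedge hmono
  obtain ⟨hcd01, hcd12⟩ := hmono
  have hcd02 := hcd01.trans hcd12
  rw [Prod.mk.injEq] at hcd01 hcd12 hcd02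
  obtain ⟨ce01, de01⟩ := hcd01
  obtain ⟨ce12, de12⟩ := hcd12
  obtain ⟨ce02, de02⟩ := hcd02
  set m := max (max (idx x₀) (idx x₁)) (idx x₂) with hm
  have hle0 : idx x₀ ≤ m := le_max_of_le_left (le_max_left _ _)
  have hle1 : idx x₁ ≤ m := le_max_of_le_left (le_max_right _ _)
  have hle2 : idx x₂ ≤ m := le_max_right _ _
  have hAm0 : x₀ ∈ A m := mono hle0 (hidx x₀ h₀).1
  have hAm1 : x₁ ∈ A m := mono hle1 (hidx x₁ h₁).1
  have hAm2 : x₂ ∈ A m := mono hle2 (hidx x₂ h₂).1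
  have notlow : ∀ x, x ∈ (⋃ i, A i) → idx x = m → x ∉ ⋃ j ∈ {j | j < m}, A j := by
    intro x hx he hmem
    simp only [Set.mem_iUnion, Set.mem_setOf_eq] at hmem
    obtain ⟨j, hj, hxj⟩ := hmem
    exact absurd ((hidx x hx).2 j hxj) (by rw [he]; exact not_le.mpr hj)
  have inlow : ∀ x, x ∈ (⋃ i, A i) → idx x < m → x ∈ ⋃ j ∈ {j | j < m}, A j := by
    intro x hx hlt
    simp only [Set.mem_iUnion, Set.mem_setOf_eq]
    exact ⟨idx x, hlt, (hidx x hx).1⟩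
  have pairCase : ∀ a b z : X, a ∈ A m → b ∈ A m → a ∈ (⋃ i, A i) → b ∈ (⋃ i, A i) →
      z ∈ (⋃ i, A i) → idx a = m → idx b = m → idx z < m →
      (∃ i, SlimEdge (g i) a b z) → d m a = d m b → False := by
    rintro a b z haA hbA ha hb hz hea heb hez ⟨i, hs⟩ hde
    exact hd m a b haA hbA
      ⟨notlow a ha hea, notlow b hb heb, hs.1, i, z, inlow z hz hez, hs⟩ hde
  have lowCase : ∀ a b z : X, a ∈ (⋃ i, A i) → b ∈ (⋃ i, A i) → z ∈ (⋃ i, A i) →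
      idx a < idx z → idx b < idx z → (∃ i, SlimEdge (g i) a b z) → False := by
    rintro a b z ha hb hz hla hlb ⟨i, hs⟩
    have haj : a ∈ A (max (idx a) (idx b)) := mono (le_max_left _ _) (hidx a ha).1
    have hbj : b ∈ A (max (idx a) (idx b)) := mono (le_max_right _ _) (hidx b hb).1
    have hzj : z ∈ A (max (idx a) (idx b)) := closure3 (hA _) i hs haj hbj
    exact absurd ((hidx z hz).2 _ hzj) (not_le.mpr (max_lt hla hlb))
  obtain ⟨i, hs⟩ := hedge
  by_cases e0 : idx x₀ = m <;> by_cases e1 : idx x₁ = m <;> by_cases e2 : idx x₂ = m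
  · rw [e0, e1] at ce01
    rw [e1, e2] at ce12
    exact hc m x₀ x₁ x₂ hAm0 hAm1 hAm2 ⟨i, hs⟩ ⟨ce01, ce12⟩
  · rw [e0, e1] at de01
    exact pairCase x₀ x₁ x₂ hAm0 hAm1 h₀ h₁ h₂ e0 e1 (lt_of_le_of_ne hle2 e2) ⟨i, hs⟩ de01
  · rw [e0, e2] at de02
    exact pairCase x₀ x₂ x₁ hAm0 hAm2 h₀ h₂ h₁ e0 e2 (lt_of_le_of_ne hle1 e1) ⟨i, slimEdge_swap12 hs⟩ de02
  · exact lowCase x₁ x₂ x₀ h₁ h₂ h₀ (e0 ▸ lt_of_le_of_ne hle1 e1) (e0 ▸ lt_of_le_of_ne hle2 e2)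
      ⟨i, slimEdge_swap12 (slimEdge_swap01 hs)⟩
  · rw [e1, e2] at de12
    exact pairCase x₁ x₂ x₀ hAm1 hAm2 h₁ h₂ h₀ e1 e2 (lt_of_le_of_ne hle0 e0) ⟨i, slimEdge_swap12 (slimEdge_swap01 hs)⟩ de12
  · exact lowCase x₀ x₂ x₁ h₀ h₂ h₁ (e1 ▸ lt_of_le_of_ne hle0 e0) (e1 ▸ lt_of_le_of_ne hle2 e2)
      ⟨i, slimEdge_swap12 hs⟩
  · exact lowCase x₀ x₁ x₂ h₀ h₁ h₂ (e2 ▸ lt_of_le_of_ne hle0 e0) (e2 ▸ lt_of_le_of_ne hle1 e1)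
      ⟨i, hs⟩
  · have hlt : max (max (idx x₀) (idx x₁)) (idx x₂) < m :=
      max_lt (max_lt (lt_of_le_of_ne hle0 e0) (lt_of_le_of_ne hle1 e1)) (lt_of_le_of_ne hle2 e2)
    rw [← hm] at hlt
    exact absurd hlt (lt_irrefl m)
end

section
/- Let X be an uncountable standard Borel abelian group (or any abelian group in which every infinite subset has a Γ-closed superset of the same cardinality) and Γ a countable union of slim linear hypergraphs of arity three on X. Then (assuming AC) the chromatic number of Γ is countable: there is c : X → ℕ such that no Γ-hyperedge is monochromatic. -/
variable {X : Type*} [AddCommGroup X]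

/-! ### Auxiliary machinery for the proof -/

/-- A symmetric reformulation of `SlimEdge`. -/
def AbcEdge (g : Fin 3 → X →+ X) (x y z : X) : Prop :=
  x ≠ y ∧ x ≠ z ∧ y ≠ z ∧
    ∃ a b c : Fin 3, a ≠ b ∧ a ≠ c ∧ b ≠ c ∧ g a x + g b y + g c z = 0

lemma fin3_perm_cases (σ : Equiv.Perm (Fin 3)) :
    (σ 0 = 0 ∧ σ 1 = 1 ∧ σ 2 = 2) ∨ (σ 0 = 0 ∧ σ 1 = 2 ∧ σ 2 = 1) ∨
    (σ 0 = 1 ∧ σ 1 = 0 ∧ σ 2 = 2) ∨ (σ 0 = 1 ∧ σ 1 = 2 ∧ σ 2 = 0) ∨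
    (σ 0 = 2 ∧ σ 1 = 0 ∧ σ 2 = 1) ∨ (σ 0 = 2 ∧ σ 1 = 1 ∧ σ 2 = 0) := by
  revert σ; decide

lemma slimEdge_abc {g : Fin 3 → X →+ X} {x y z : X} (h : SlimEdge g x y z) :
    AbcEdge g x y z := by
  obtain ⟨h1, h2, h3, σ, hσ⟩ := h
  refine ⟨h1, h2, h3, ?_⟩
  rcases fin3_perm_cases σ with ⟨e0,e1,e2⟩|⟨e0,e1,e2⟩|⟨e0,e1,e2⟩|⟨e0,e1,e2⟩|⟨e0,e1,e2⟩|⟨e0,e1,e2⟩ <;>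
    rw [e0, e1, e2] at hσ <;>
    simp only [Matrix.cons_val_zero, Matrix.cons_val_one, Matrix.head_cons,
      Matrix.cons_val_two, Matrix.tail_cons] at hσ
  · exact ⟨0, 1, 2, by decide, by decide, by decide, by rw [← hσ]; try abel⟩
  · exact ⟨0, 2, 1, by decide, by decide, by decide, by rw [← hσ]; try abel⟩
  · exact ⟨1, 0, 2, by decide, by decide, by decide, by rw [← hσ]; try abel⟩
  · exact ⟨2, 0, 1, by decide, by decide, by decide, by rw [← hσ]; try abel⟩
  · exact ⟨1, 2, 0, by decide, by decide, by decide, by rw [← hσ]; try abel⟩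
  · exact ⟨2, 1, 0, by decide, by decide, by decide, by rw [← hσ]; try abel⟩

lemma abcEdge_swap01 {g : Fin 3 → X →+ X} {x y z : X} (h : AbcEdge g x y z) :
    AbcEdge g y x z := by
  obtain ⟨h1, h2, h3, a, b, c, hab, hac, hbc, he⟩ := h
  exact ⟨h1.symm, h3, h2, b, a, c, hab.symm, hbc, hac, by rw [← he]; try abel⟩

lemma abcEdge_swap12 {g : Fin 3 → X →+ X} {x y z : X} (h : AbcEdge g x y z) :
    AbcEdge g x z y := by
  obtain ⟨h1, h2, h3, a, b, c, hab, hac, hbc, he⟩ := h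
  exact ⟨h2, h1, h3.symm, a, c, b, hac, hab, hbc.symm, by rw [← he]; try abel⟩

/-- A symmetric, irreflexive, locally countable graph has a proper `ℕ`-coloring. -/
lemma exists_proper_coloring {Q : Type*} (r : Q → Q → Prop)
    (hsym : ∀ u v, r u v → r v u)
    (hirr : ∀ u v, r u v → u ≠ v)
    (hloc : ∀ u, {v | r u v}.Countable) :
    ∃ c : Q → ℕ, ∀ u v, r u v → c u ≠ c v := by
  classical
  set R := Relation.ReflTransGen r with hR
  have hRsymm : ∀ u v, R u v → R v u := by
    intro u v h
    induction h with
    | refl => exact .refl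
    | tail _ h2 ih => exact Relation.ReflTransGen.head (hsym _ _ h2) ih
  have hclass : ∀ u, {v | R u v}.Countable := by
    intro u
    set C : ℕ → Set Q := fun n =>
      Nat.rec {u} (fun _ S => S ∪ ⋃ x ∈ S, {v | r x v}) n with hC
    have hCc : ∀ n, (C n).Countable := by
      intro n
      induction n with
      | zero => exact Set.countable_singleton u
      | succ n ih =>
        exact ih.union (Set.Countable.biUnion ih fun x _ => hloc x)
    have hsub : {v | R u v} ⊆ ⋃ n, C n := by
      intro v hv
      induction hv with
      | refl => exact Set.mem_iUnion.mpr ⟨0, rfl⟩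
      | tail _ h2 ih =>
        obtain ⟨n, hn⟩ := Set.mem_iUnion.mp ih
        exact Set.mem_iUnion.mpr ⟨n + 1, Or.inr (Set.mem_biUnion hn h2)⟩
    exact (Set.countable_iUnion hCc).mono hsub
  have hclasseq : ∀ u v, R u v → {w | R u w} = {w | R v w} := by
    intro u v huv
    ext w
    exact ⟨fun h => (hRsymm _ _ huv).trans h, fun h => huv.trans h⟩
  set F : Set Q → Q → ℕ := fun S =>
    if h : S.Countable then Classical.choose (Set.countable_iff_exists_injOn.mp h)
    else fun _ => 0 with hF
  refine ⟨fun u => F {w | R u w} u, ?_⟩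
  intro u v huv
  have hRuv : R u v := Relation.ReflTransGen.single huv
  have hSeq := hclasseq u v hRuv
  show F {w | R u w} u ≠ F {w | R v w} v
  rw [hSeq]
  set S : Set Q := {w | R v w} with hS
  have hSc : S.Countable := hclass v
  have hFS : F S = Classical.choose (Set.countable_iff_exists_injOn.mp hSc) := by
    rw [hF]; simp [hSc]
  have hinj := Classical.choose_spec (Set.countable_iff_exists_injOn.mp hSc)
  rw [hFS]
  have hu : u ∈ S := hRsymm _ _ hRuv
  have hv : v ∈ S := Relation.ReflTransGen.refl
  exact fun he => hirr u v huv (hinj hu hv he)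

section GCfacts
variable {ι : Type*} {g : ι → Fin 3 → X →+ X} {A : Set X}

lemma GC.neg_mem (hA : GammaClosed g A) {x : X} (hx : x ∈ A) : -x ∈ A := by
  have := hA.2.1 0 hA.1 x hx; rwa [zero_sub] at this

lemma GC.add_mem (hA : GammaClosed g A) {x y : X} (hx : x ∈ A) (hy : y ∈ A) :
    x + y ∈ A := by
  have := hA.2.1 x hx (-y) (GC.neg_mem hA hy); rwa [sub_neg_eq_add] at this

lemma GC.sub_mem (hA : GammaClosed g A) {x y : X} (hx : x ∈ A) (hy : y ∈ A) :
    x - y ∈ A := hA.2.1 x hx y hy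

/-- An edge cannot have exactly one vertex outside a Γ-closed set. -/
lemma GC.mem_of_two (hA : GammaClosed g A) {i : ι} {x y z : X}
    (h : AbcEdge (g i) x y z) (hy : y ∈ A) (hz : z ∈ A) : x ∈ A := by
  obtain ⟨-, -, -, a, b, c, -, -, -, he⟩ := h
  have h1 : g i a x = (0 - g i b y) - g i c z := by rw [← he]; abel
  have h2 : g i a x ∈ A :=
    h1 ▸ hA.2.1 _ (hA.2.1 0 hA.1 _ (hA.2.2.1 i b y hy)) _ (hA.2.2.1 i c z hz)
  exact hA.2.2.2.1 i a x h2

/-- Proper coloring for the remainder graph over a Γ-closed set. -/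
lemma exists_rem_coloring (hA : GammaClosed g A) [Countable ι] :
    ∃ e : X → ℕ, ∀ (i : ι) (x y z : X), x ∉ A → y ∉ A → z ∈ A →
      AbcEdge (g i) x y z → e x ≠ e y := by
  classical
  set A' : AddSubgroup X :=
    { carrier := A
      zero_mem' := hA.1
      add_mem' := fun hx hy => GC.add_mem hA hx hy
      neg_mem' := fun hx => GC.neg_mem hA hx } with hA'
  have hmk : ∀ x y : X, (QuotientAddGroup.mk x : X ⧸ A') = QuotientAddGroup.mk y ↔
      x - y ∈ A := by
    intro x y
    rw [QuotientAddGroup.eq]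
    constructor
    · intro h
      have := GC.neg_mem hA (show (-x + y : X) ∈ A from h)
      rwa [neg_add_rev, neg_neg, neg_add_eq_sub] at this
    · intro h
      have := GC.neg_mem hA h
      rwa [neg_sub, sub_eq_neg_add] at this
  set mk : X → X ⧸ A' := QuotientAddGroup.mk with hmkdef
  set r : (X ⧸ A') → (X ⧸ A') → Prop := fun u v => u ≠ v ∧
    ∃ (i : ι) (a b : Fin 3) (x y : X), mk x = u ∧ mk y = v ∧ g i a x + g i b y ∈ A with hr
  have hsym : ∀ u v, r u v → r v u := by
    rintro u v ⟨hne, i, a, b, x, y, hx, hy, hm⟩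
    exact ⟨hne.symm, i, b, a, y, x, hy, hx, by rwa [add_comm]⟩
  have hloc : ∀ u, {v | r u v}.Countable := by
    intro u
    have hsub : {v | r u v} ⊆ ⋃ p : ι × Fin 3 × Fin 3,
        {v | ∃ x y : X, mk x = u ∧ mk y = v ∧ g p.1 p.2.1 x + g p.1 p.2.2 y ∈ A} := by
      rintro v ⟨-, i, a, b, x, y, hx, hy, hm⟩
      exact Set.mem_iUnion.mpr ⟨(i, a, b), x, y, hx, hy, hm⟩
    refine (Set.countable_iUnion fun p => Set.Subsingleton.countable ?_).mono hsub
    rintro v ⟨x, y, hx, hy, hm⟩ v' ⟨x', y', hx', hy', hm'⟩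
    obtain ⟨i, a, b⟩ := p
    have hxx : x - x' ∈ A := (hmk x x').mp (hx.trans hx'.symm)
    have key : g i b (y - y') =
        ((g i a x + g i b y) - (g i a x' + g i b y')) - g i a (x - x') := by
      simp only [map_sub]; abel
    have hmem2 : g i b (y - y') ∈ A :=
      key ▸ GC.sub_mem hA (GC.sub_mem hA hm hm') (hA.2.2.1 i a _ hxx)
    have hyy : y - y' ∈ A := hA.2.2.2.1 i b _ hmem2
    rw [← hy, ← hy']
    exact (hmk y y').mpr hyy
  obtain ⟨ch, hch⟩ := exists_proper_coloring r hsym (fun u v h => h.1) hloc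
  refine ⟨fun x => ch (mk x), ?_⟩
  intro i x y z hx hy hz hedge
  obtain ⟨hxy, -, -, a, b, c, hab, -, -, he⟩ := hedge
  have hsumA : g i a x + g i b y ∈ A := by
    have h1 : g i a x + g i b y = 0 - g i c z := by rw [← he]; abel
    exact h1 ▸ hA.2.1 0 hA.1 _ (hA.2.2.1 i c z hz)
  have hne : mk x ≠ mk y := by
    intro hmm
    have hxyA : x - y ∈ A := (hmk x y).mp hmm
    have key : g i a x + g i b x = (g i a x + g i b y) + g i b (x - y) := by
      simp only [map_sub]; abel
    exact hx (hA.2.2.2.2 i a b hab x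
      (key ▸ GC.add_mem hA hsumA (hA.2.2.1 i b _ hxyA)))
  exact hch (mk x) (mk y) ⟨hne, i, a, b, x, y, rfl, rfl, hsumA⟩

end GCfacts

lemma goodOn_of_countable (g : ℕ → Fin 3 → X →+ X) {A : Set X}
    (h : Cardinal.mk A ≤ Cardinal.aleph0) :
    ∃ c : X → ℕ, ∀ x y z : X, x ∈ A → y ∈ A → z ∈ A →
      (∃ i, AbcEdge (g i) x y z) → ¬(c x = c y ∧ c y = c z) := by
  have hcnt : A.Countable := by
    rw [← Set.countable_coe_iff]
    exact Cardinal.mk_le_aleph0_iff.mp h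
  obtain ⟨f, hf⟩ := Set.countable_iff_exists_injOn.mp hcnt
  exact ⟨f, fun x y z hx hy hz ⟨i, he⟩ hc => he.1 (hf hx hy hc.1)⟩

/-- The transfinite chain of Γ-closed sets. -/
lemma exists_chain {g : ℕ → Fin 3 → X →+ X}
    (hcl : ∀ S : Set X, S.Infinite →
      ∃ T : Set X, S ⊆ T ∧ GammaClosed g T ∧ Cardinal.mk T = Cardinal.mk S)
    {A₀ : Set X} (hA₀inf : A₀.Infinite)
    {I : Type*} [LinearOrder I] [WellFoundedLT I] (φ : I → X) :
    ∃ T : I → Set X, ∀ i,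
      (A₀ ∪ ((φ '' Set.Iic i) ∪ ⋃ j : {j : I // j < i}, T j)) ⊆ T i ∧
      GammaClosed g (T i) ∧
      Cardinal.mk (T i) =
        Cardinal.mk ((A₀ ∪ ((φ '' Set.Iic i) ∪ ⋃ j : {j : I // j < i}, T j)) : Set X) := by
  refine ⟨(wellFounded_lt (α := I)).fix
    (fun i rec => Classical.choose (hcl
      (A₀ ∪ ((φ '' Set.Iic i) ∪ ⋃ j : {j : I // j < i}, rec j j.2))
      (hA₀inf.mono Set.subset_union_left))), fun i => ?_⟩
  have heq := (wellFounded_lt (α := I)).fix_eq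
    (fun i (rec : ∀ j, j < i → Set X) => Classical.choose (hcl
      (A₀ ∪ ((φ '' Set.Iic i) ∪ ⋃ j : {j : I // j < i}, rec j j.2))
      (hA₀inf.mono Set.subset_union_left))) i
  rw [heq]
  exact Classical.choose_spec (hcl
    (A₀ ∪ ((φ '' Set.Iic i) ∪ ⋃ j : {j : I // j < i},
      (wellFounded_lt (α := I)).fix
        (fun i' (rec : ∀ j', j' < i' → Set X) => Classical.choose (hcl
          (A₀ ∪ ((φ '' Set.Iic i') ∪ ⋃ j' : {j' : I // j' < i'}, rec j' j'.2))
          (hA₀inf.mono Set.subset_union_left))) j))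
    (hA₀inf.mono Set.subset_union_left))

lemma main_induction (g : ℕ → Fin 3 → X →+ X)
    (hcl : ∀ S : Set X, S.Infinite →
      ∃ T : Set X, S ⊆ T ∧ GammaClosed g T ∧ Cardinal.mk T = Cardinal.mk S)
    (κ : Cardinal) :
    ∀ A : Set X, GammaClosed g A → Cardinal.mk A ≤ κ →
      ∃ c : X → ℕ, ∀ x y z : X, x ∈ A → y ∈ A → z ∈ A →
        (∃ i, AbcEdge (g i) x y z) → ¬(c x = c y ∧ c y = c z) := by
  classical
  induction κ using WellFoundedLT.induction with
  | _ κ IH => ?_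
  intro A hA hAκ
  rcases lt_or_ge (Cardinal.mk A) κ with hlt | hge
  · exact IH _ hlt A hA le_rfl
  have hκA : κ = Cardinal.mk A := le_antisymm hge hAκ
  subst hκA
  by_cases hcnt' : Cardinal.mk A ≤ Cardinal.aleph0
  · exact goodOn_of_countable g hcnt'
  push_neg at hcnt'
  have hℵ : Cardinal.aleph0 < Cardinal.mk A := hcnt'
  -- A is infinite; get a countable infinite Γ-closed base set A₀
  have hAinf : A.Infinite := by
    rw [← Set.infinite_coe_iff]
    exact Cardinal.infinite_iff.mpr hℵ.le
  set f0 : ℕ ↪ A := hAinf.natEmbedding with hf0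
  set S0 : Set X := Set.range fun n => (f0 n : X) with hS0
  have hS0inf : S0.Infinite :=
    Set.infinite_range_of_injective fun m n h => f0.injective (Subtype.val_injective h)
  have hS0cnt : S0.Countable := Set.countable_range _
  obtain ⟨A₀, hS0sub, hA₀cl, hA₀card⟩ := hcl S0 hS0inf
  have hA₀inf : A₀.Infinite := hS0inf.mono hS0sub
  have hA₀count : Cardinal.mk A₀ = Cardinal.aleph0 := by
    rw [hA₀card]
    haveI := hS0cnt.to_subtype
    haveI := hS0inf.to_subtype
    exact Cardinal.mk_eq_aleph0 _
  -- index type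
  set I := (Cardinal.mk A).ord.ToType with hI
  have hImk : Cardinal.mk I = Cardinal.mk A := by
    rw [hI, Cardinal.mk_toType, Cardinal.card_ord]
  have hIne : Nonempty I :=
    Cardinal.mk_ne_zero_iff.mp (by rw [hImk]; exact (Cardinal.aleph0_pos.trans hℵ).ne')
  obtain ⟨φ⟩ : Nonempty (I ≃ A) := Cardinal.eq.mp hImk
  -- the chain
  obtain ⟨T, hTspec⟩ := exists_chain hcl hA₀inf (I := I) (fun j => (φ j : X))
  have hBsub : ∀ i : I,
      (A₀ ∪ (((fun j => (φ j : X)) '' Set.Iic i) ∪ ⋃ j : {j : I // j < i}, T j)) ⊆ T i :=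
    fun i => (hTspec i).1
  have hA₀T : ∀ i, A₀ ⊆ T i := fun i => Set.subset_union_left.trans (hBsub i)
  have hφT : ∀ i j : I, j ≤ i → (φ j : X) ∈ T i :=
    fun i j hji => hBsub i (Or.inr (Or.inl ⟨j, hji, rfl⟩))
  have hmono : ∀ {j i : I}, j < i → T j ⊆ T i := fun {j i} hji x hx =>
    hBsub i (Or.inr (Or.inr (Set.mem_iUnion.mpr ⟨⟨j, hji⟩, hx⟩)))
  have hmono' : ∀ {j i : I}, j ≤ i → T j ⊆ T i := by
    intro j i hji
    rcases hji.lt_or_eq with h | h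
    · exact hmono h
    · exact h ▸ subset_rfl
  have hTclosed : ∀ i, GammaClosed g (T i) := fun i => (hTspec i).2.1
  -- cardinality bound
  have hIicLt : ∀ i : I, Cardinal.mk (Set.Iic i) < Cardinal.mk A := by
    intro i
    have h1 : Cardinal.mk (Set.Iio i) < Cardinal.mk A := Cardinal.mk_Iio_ord_toType i
    have h2 : (Set.Iic i : Set I) ⊆ Set.Iio i ∪ {i} := by
      intro w hw
      rcases (Set.mem_Iic.mp hw).lt_or_eq with h | h
      · exact Or.inl h
      · exact Or.inr h
    calc Cardinal.mk (Set.Iic i) ≤ Cardinal.mk ((Set.Iio i ∪ {i} : Set I)) :=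
          Cardinal.mk_le_mk_of_subset h2
      _ ≤ Cardinal.mk (Set.Iio i) + Cardinal.mk ({i} : Set I) := Cardinal.mk_union_le _ _
      _ = Cardinal.mk (Set.Iio i) + 1 := by rw [Cardinal.mk_singleton]
      _ < Cardinal.mk A := Cardinal.add_lt_of_lt hℵ.le h1 (Cardinal.one_lt_aleph0.trans hℵ)
  have hcard : ∀ i : I, Cardinal.mk (T i) ≤ Cardinal.aleph0 + Cardinal.mk (Set.Iic i) := by
    intro i
    induction i using WellFoundedLT.induction with
    | _ i IH2 => ?_
    set μ := Cardinal.aleph0 + Cardinal.mk (Set.Iic i) with hμ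
    have hμinf : Cardinal.aleph0 ≤ μ := self_le_add_right _ _
    have h1 : Cardinal.mk ((fun j => (φ j : X)) '' Set.Iic i) ≤ μ :=
      le_trans Cardinal.mk_image_le le_add_self
    have h2 : Cardinal.mk (⋃ j : {j : I // j < i}, T j) ≤ μ := by
      refine le_trans Cardinal.mk_iUnion_le_sum_mk ?_
      have hb : ∀ j : {j : I // j < i}, Cardinal.mk (T j) ≤ μ := by
        intro j
        refine (IH2 j j.2).trans (add_le_add_right ?_ _)
        exact Cardinal.mk_le_mk_of_subset fun w hw => le_trans (hw : w ≤ (j : I)) j.2.le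
      refine le_trans (Cardinal.sum_le_sum _ (fun _ => μ) hb) ?_
      rw [Cardinal.sum_const']
      have hsub : Cardinal.mk {j : I // j < i} ≤ μ := by
        refine le_trans ?_ (le_add_self (a := Cardinal.mk (Set.Iic i)))
        exact Cardinal.mk_le_mk_of_subset fun w (hw : w < i) => hw.le
      exact le_trans (mul_le_mul' hsub le_rfl) (le_of_eq (Cardinal.mul_eq_self hμinf))
    rw [(hTspec i).2.2]
    calc Cardinal.mk ((A₀ ∪ (((fun j => (φ j : X)) '' Set.Iic i) ∪
            ⋃ j : {j : I // j < i}, T j)) : Set X)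
        ≤ Cardinal.mk A₀ + (Cardinal.mk ((fun j => (φ j : X)) '' Set.Iic i) +
            Cardinal.mk (⋃ j : {j : I // j < i}, T j)) :=
          le_trans (Cardinal.mk_union_le _ _) (add_le_add_right (Cardinal.mk_union_le _ _) _)
      _ ≤ μ + (μ + μ) := add_le_add (hA₀count ▸ hμinf) (add_le_add h1 h2)
      _ = μ := by rw [Cardinal.add_eq_self hμinf, Cardinal.add_eq_self hμinf]
  have hTlt : ∀ i, Cardinal.mk (T i) < Cardinal.mk A := fun i =>
    lt_of_le_of_lt (hcard i) (Cardinal.add_lt_of_lt hℵ.le hℵ (hIicLt i))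
  -- A is covered
  have hcover : ∀ x ∈ A, ∃ i, x ∈ T i := by
    intro x hx
    refine ⟨φ.symm ⟨x, hx⟩, ?_⟩
    have := hφT (φ.symm ⟨x, hx⟩) (φ.symm ⟨x, hx⟩) le_rfl
    rwa [Equiv.apply_symm_apply] at this
  -- rank function
  have hwfI : WellFounded ((· < ·) : I → I → Prop) := wellFounded_lt
  set rk : X → I := fun x =>
    if h : ∃ i, x ∈ T i then hwfI.min {i | x ∈ T i} h else hIne.some with hrk
  have hrk_mem : ∀ x, ∀ h : ∃ i, x ∈ T i, x ∈ T (rk x) := by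
    intro x h
    rw [hrk]
    simp only [dif_pos h]
    exact hwfI.min_mem {i | x ∈ T i} h
  have hrk_min : ∀ x, (∃ i, x ∈ T i) → ∀ j, j < rk x → x ∉ T j := by
    intro x h j hj hxj
    refine hwfI.not_lt_min {i | x ∈ T i} (hxj : x ∈ T j) ?_
    rw [hrk] at hj
    simpa only [dif_pos h] using hj
  -- the union of lower levels
  set U : I → Set X := fun i => A₀ ∪ ⋃ j : {j : I // j < i}, T j with hU
  have hTU : ∀ i j : I, j < i → T j ⊆ U i := fun i j hj w hw =>
    Or.inr (Set.mem_iUnion.mpr ⟨⟨j, hj⟩, hw⟩)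
  have hUmem : ∀ (i : I) (w : X), w ∈ U i ↔ (w ∈ A₀ ∨ ∃ j, j < i ∧ w ∈ T j) := by
    intro i w
    constructor
    · rintro (h | h)
      · exact Or.inl h
      · obtain ⟨⟨j, hj⟩, hw⟩ := Set.mem_iUnion.mp h
        exact Or.inr ⟨j, hj, hw⟩
    · rintro (h | ⟨j, hj, hw⟩)
      · exact Or.inl h
      · exact Or.inr (Set.mem_iUnion.mpr ⟨⟨j, hj⟩, hw⟩)
  have hUpair : ∀ i : I, ∀ x ∈ U i, ∀ y ∈ U i,
      ∃ C : Set X, GammaClosed g C ∧ C ⊆ U i ∧ x ∈ C ∧ y ∈ C := by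
    intro i x hxU y hyU
    rcases (hUmem i x).mp hxU with hx0 | ⟨j, hj, hxj⟩ <;>
      rcases (hUmem i y).mp hyU with hy0 | ⟨k, hk, hyk⟩
    · exact ⟨A₀, hA₀cl, Set.subset_union_left, hx0, hy0⟩
    · exact ⟨T k, hTclosed k, hTU i k hk, hA₀T k hx0, hyk⟩
    · exact ⟨T j, hTclosed j, hTU i j hj, hxj, hA₀T j hy0⟩
    · exact ⟨T (max j k), hTclosed _, hTU i _ (max_lt hj hk),
        hmono' (le_max_left j k) hxj, hmono' (le_max_right j k) hyk⟩
  have hUclosed : ∀ i, GammaClosed g (U i) := by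
    intro i
    refine ⟨Or.inl hA₀cl.1, ?_, ?_, ?_, ?_⟩
    · intro x hx y hy
      obtain ⟨C, hC, hCU, hxC, hyC⟩ := hUpair i x hx y hy
      exact hCU (hC.2.1 x hxC y hyC)
    · intro i' j x hx
      obtain ⟨C, hC, hCU, hxC, -⟩ := hUpair i x hx x hx
      exact hCU (hC.2.2.1 i' j x hxC)
    · intro i' j x hx
      obtain ⟨C, hC, hCU, hxC, -⟩ := hUpair i _ hx _ hx
      exact hCU (hC.2.2.2.1 i' j x hxC)
    · intro i' j k hjk x hx
      obtain ⟨C, hC, hCU, hxC, -⟩ := hUpair i _ hx _ hx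
      exact hCU (hC.2.2.2.2 i' j k hjk x hxC)
  have hinU : ∀ w, (∃ i, w ∈ T i) → ∀ m, rk w < m → w ∈ U m := fun w h m hm =>
    Or.inr (Set.mem_iUnion.mpr ⟨⟨rk w, hm⟩, hrk_mem w h⟩)
  have hnotU : ∀ w, ∀ h : ∃ i, w ∈ T i, ∀ j, j < rk w → w ∉ U (rk w) := by
    intro w h j hj hw
    rcases (hUmem (rk w) w).mp hw with hw0 | ⟨j', hj', hwj'⟩
    · exact hrk_min w h j hj (hA₀T j hw0)
    · exact hrk_min w h j' hj' hwj'
  -- colorings of the pieces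
  have hd : ∀ i : I, ∃ d : X → ℕ, ∀ x y z : X, x ∈ T i → y ∈ T i → z ∈ T i →
      (∃ i', AbcEdge (g i') x y z) → ¬(d x = d y ∧ d y = d z) :=
    fun i => IH (Cardinal.mk (T i)) (hTlt i) (T i) (hTclosed i) le_rfl
  choose d hdspec using hd
  have he : ∀ i : I, ∃ e : X → ℕ, ∀ (i' : ℕ) (x y z : X), x ∉ U i → y ∉ U i → z ∈ U i →
      AbcEdge (g i') x y z → e x ≠ e y :=
    fun i => exists_rem_coloring (hUclosed i)
  choose e hespec using he
  refine ⟨fun x => Nat.pair (d (rk x) x) (e (rk x) x), ?_⟩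
  intro x y z hx hy hz hedge hcc
  obtain ⟨i, hE⟩ := hedge
  have hxT := hcover x hx
  have hyT := hcover y hy
  have hzT := hcover z hz
  obtain ⟨hc1, hc2⟩ := hcc
  obtain ⟨dxy, exy⟩ := Nat.pair_eq_pair.mp hc1
  obtain ⟨dyz, eyz⟩ := Nat.pair_eq_pair.mp hc2
  have dxz := dxy.trans dyz
  have exz := exy.trans eyz
  -- the sorted main case analysis
  have main3 : ∀ (x y z : X) (i : ℕ), AbcEdge (g i) x y z →
      (∃ i', x ∈ T i') → (∃ i', y ∈ T i') → (∃ i', z ∈ T i') →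
      d (rk x) x = d (rk y) y → d (rk y) y = d (rk z) z →
      e (rk x) x = e (rk y) y →
      rk z ≤ rk y → rk y ≤ rk x → False := by
    clear hE hxT hyT hzT dxy dyz dxz exy eyz exz hc1 hc2 hx hy hz i x y z
    intro x y z i hE hxT hyT hzT hd1 hd2 he1 hzy hyx
    rcases lt_or_eq_of_le hyx with hlt | heq
    · -- x has strictly maximal rank: impossible by Γ-closedness of U (rk x)
      have hyU : y ∈ U (rk x) := hinU y hyT _ hlt
      have hzU : z ∈ U (rk x) := hinU z hzT _ (lt_of_le_of_lt hzy hlt)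
      exact hnotU x hxT (rk y) hlt (GC.mem_of_two (hUclosed (rk x)) hE hyU hzU)
    · rcases lt_or_eq_of_le hzy with hlt2 | heq2
      · -- x, y on top, z strictly below: remainder coloring
        have hzx : rk z < rk x := lt_of_lt_of_le hlt2 (le_of_eq heq)
        have hzU : z ∈ U (rk x) := hinU z hzT _ hzx
        have hxnot : x ∉ U (rk x) := hnotU x hxT (rk z) hzx
        have hynot : y ∉ U (rk x) := by
          have h' := hnotU y hyT (rk z) hlt2
          rwa [heq] at h'
        rw [heq] at he1
        exact hespec (rk x) i x y z hxnot hynot hzU hE he1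
      · -- all three ranks equal: coloring of T (rk x)
        have hyTm : y ∈ T (rk x) := heq ▸ hrk_mem y hyT
        have hzTm : z ∈ T (rk x) := (heq2.trans heq) ▸ hrk_mem z hzT
        refine hdspec (rk x) x y z (hrk_mem x hxT) hyTm hzTm ⟨i, hE⟩ ?_
        rw [heq] at hd1
        rw [heq2, heq] at hd2
        exact ⟨hd1, hd2⟩
  have E_xzy := abcEdge_swap12 hE
  have E_yxz := abcEdge_swap01 hE
  have E_yzx := abcEdge_swap12 E_yxz
  have E_zxy := abcEdge_swap01 E_xzy
  have E_zyx := abcEdge_swap01 E_yzx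
  rcases le_total (rk x) (rk y) with h1 | h1
  · rcases le_total (rk y) (rk z) with h2 | h2
    · exact main3 z y x i E_zyx hzT hyT hxT dyz.symm dxy.symm eyz.symm h1 h2
    · rcases le_total (rk x) (rk z) with h3 | h3
      · exact main3 y z x i E_yzx hyT hzT hxT dyz dxz.symm eyz h3 h2
      · exact main3 y x z i E_yxz hyT hxT hzT dxy.symm dxz exy.symm h3 h1
  · rcases le_total (rk y) (rk z) with h2 | h2
    · rcases le_total (rk x) (rk z) with h3 | h3
      · exact main3 z x y i E_zxy hzT hxT hyT dxz.symm dxy exz.symm h1 h3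
      · exact main3 x z y i E_xzy hxT hzT hyT dxz dyz.symm exz h2 h3
    · exact main3 x y z i hE hxT hyT hzT dxy dyz exy h2 h1

/-- If every infinite subset of `X` has a Γ-closed superset of the same cardinality
(which holds e.g. for standard Borel abelian groups), then a countable union Γ of slim
linear hypergraphs of arity three has countable chromatic number. -/
theorem stmt9 (g : ℕ → Fin 3 → X →+ X) (hg : ∀ i, IsSlim (g i))
    (hcl : ∀ S : Set X, S.Infinite →
      ∃ T : Set X, S ⊆ T ∧ GammaClosed g T ∧ Cardinal.mk T = Cardinal.mk S) :
    ∃ c : X → ℕ, ∀ x₀ x₁ x₂ : X, GEdge g x₀ x₁ x₂ →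
      ¬(c x₀ = c x₁ ∧ c x₁ = c x₂) := by
  have huniv : GammaClosed g (Set.univ : Set X) := by
    refine ⟨trivial, ?_, ?_, ?_, ?_⟩ <;> intros <;> trivial
  obtain ⟨c, hc⟩ :=
    main_induction g hcl (Cardinal.mk (Set.univ : Set X)) Set.univ huniv le_rfl
  exact ⟨c, fun x₀ x₁ x₂ h => hc x₀ x₁ x₂ trivial trivial trivial
    (h.elim fun i hs => ⟨i, slimEdge_abc hs⟩)⟩
end

section
/- Let X be a set and Γ a 3-uniform hypergraph on X such that there is d ∈ ℕ with: for all x_0, x_1 ∈ X, the set {x_2 : {x_0,x_1,x_2} ∈ Γ} has cardinality at most d. Then the poset R(Γ) of finite partial proper Γ-colorings p : X ⇀ ℕ (ordered by reverse inclusion) is σ-Ramsey-centered: it is a countable union of Ramsey-centered sets. -/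
variable {X : Type*} [DecidableEq X]

/-- A condition of the finite approximation coloring poset `R(Γ)` for a 3-uniform
hypergraph `Γ`: a finite partial function into ℕ under which no Γ-hyperedge contained
in its domain is monochromatic. -/
def IsCond3 (Γ : Set (Finset X)) (p : Finset (X × ℕ)) : Prop :=
  (∀ a ∈ p, ∀ b ∈ p, Prod.fst a = Prod.fst b → a = b) ∧
  ∀ x₀ x₁ x₂ : X, ∀ n : ℕ, x₀ ≠ x₁ → x₀ ≠ x₂ → x₁ ≠ x₂ →
    ({x₀, x₁, x₂} : Finset X) ∈ Γ →
    ¬((x₀, n) ∈ p ∧ (x₁, n) ∈ p ∧ (x₂, n) ∈ p)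

/-- A subset `A` of the poset (conditions ordered by reverse inclusion) is
Ramsey-centered: for every `n` there is `m` such that among any `m` elements of `A`,
some `n` of them have a common lower bound in the poset. -/
def RamseyCentered (Cond A : Set (Finset (X × ℕ))) : Prop :=
  ∀ n : ℕ, ∃ m : ℕ, ∀ f : Fin m → Finset (X × ℕ), (∀ i, f i ∈ A) →
    ∃ b : Finset (Fin m), b.card = n ∧ ∃ r ∈ Cond, ∀ i ∈ b, f i ⊆ r


open Finset

/-- Threshold for the finite sunflower (Δ-system) lemma. -/
def sfB : ℕ → ℕ → ℕ
  | 0, _ => 2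
  | (k+1), s => (k+1)*(s+1)*(sfB k s) + 1

lemma sfB_pos (k s : ℕ) : 1 ≤ sfB k s := by
  cases k <;> simp [sfB]

/-- Finite sunflower lemma: a large family of small sets contains a Δ-system. -/
lemma sunflower_lemma {X : Type*} [DecidableEq X] :
    ∀ (k s : ℕ) (F : Finset (Finset X)), (∀ A ∈ F, A.card ≤ k) → sfB k s ≤ F.card →
    ∃ c : Finset X, ∃ G ⊆ F, s + 1 ≤ G.card ∧
      ∀ A ∈ G, ∀ B ∈ G, A ≠ B → A ∩ B = c := by
  intro k
  induction k with
  | zero =>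
    intro s F hsize hcard
    exfalso
    have : F ⊆ {∅} := by
      intro A hA
      simp only [mem_singleton]
      exact card_eq_zero.mp (Nat.le_zero.mp (hsize A hA))
    have := card_le_card this
    simp [sfB] at hcard
    simp at this
    omega
  | succ k ih =>
    intro s F hsize hcard
    classical
    -- maximal pairwise disjoint subfamily
    have hDne : (F.powerset.filter (fun P => ∀ A ∈ P, ∀ B ∈ P, A ≠ B → Disjoint A B)).Nonempty := by
      refine ⟨∅, ?_⟩
      simp
    obtain ⟨P, hPD, hPmax⟩ :=
      exists_max_image _ Finset.card hDne
    rw [mem_filter, mem_powerset] at hPD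
    obtain ⟨hPF, hPdisj⟩ := hPD
    by_cases hP : s + 1 ≤ P.card
    · exact ⟨∅, P, hPF, hP, fun A hA B hB hAB =>
        disjoint_iff_inter_eq_empty.mp (hPdisj A hA B hB hAB)⟩
    push_neg at hP
    set Y : Finset X := P.biUnion id with hY
    have hYcard : Y.card ≤ (k+1) * s := by
      calc Y.card ≤ ∑ A ∈ P, A.card := card_biUnion_le
        _ ≤ ∑ _A ∈ P, (k+1) := Finset.sum_le_sum (fun A hA => hsize A (hPF hA))
        _ = P.card * (k+1) := by rw [Finset.sum_const, smul_eq_mul]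
        _ ≤ s * (k+1) := by have : P.card ≤ s := by omega
                            exact Nat.mul_le_mul_right _ this
        _ = (k+1) * s := Nat.mul_comm _ _
    -- every nonempty member of F meets Y
    have hmeet : ∀ A ∈ F, A ≠ ∅ → (A ∩ Y).Nonempty := by
      intro A hAF hAne
      by_contra hcon
      rw [not_nonempty_iff_eq_empty] at hcon
      have hAY : ∀ B ∈ P, Disjoint A B := by
        intro B hB
        rw [Finset.disjoint_left]
        intro a haA haB
        have : a ∈ A ∩ Y := by
          rw [mem_inter]
          exact ⟨haA, Finset.mem_biUnion.mpr ⟨B, hB, haB⟩⟩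
        simp [hcon] at this
      have hAP : A ∉ P := by
        intro hAP
        have := hAY A hAP
        rw [disjoint_self] at this
        exact hAne (by simpa using this)
      have hins : insert A P ∈ F.powerset.filter
          (fun P => ∀ A ∈ P, ∀ B ∈ P, A ≠ B → Disjoint A B) := by
        rw [mem_filter, mem_powerset]
        constructor
        · intro B hB
          rcases Finset.mem_insert.mp hB with h | h
          · exact h ▸ hAF
          · exact hPF h
        · intro B hB C hC hBC
          rcases Finset.mem_insert.mp hB with hB' | hB' <;>
            rcases Finset.mem_insert.mp hC with hC' | hC'
          · exact absurd (hB'.trans hC'.symm) hBC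
          · exact hB' ▸ hAY C hC'
          · exact (hC' ▸ (hAY B hB')).symm
          · exact hPdisj B hB' C hC' hBC
      have := hPmax _ hins
      rw [Finset.card_insert_of_notMem hAP] at this
      omega
    -- pigeonhole: some y is in many members
    set F' : Finset (Finset X) := F.erase ∅ with hF'
    have hF'card : sfB (k+1) s - 1 ≤ F'.card := by
      have := Finset.card_erase_of_mem (s := F) (a := (∅ : Finset X))
      by_cases h : (∅ : Finset X) ∈ F
      · rw [hF', Finset.card_erase_of_mem h]; omega
      · rw [hF', Finset.erase_eq_of_notMem h]; omega
    have hsum : F'.card ≤ ∑ y ∈ Y, (F'.filter (fun A => y ∈ A)).card := by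
      have : ∀ A ∈ F', (A ∩ Y).Nonempty := by
        intro A hA
        rw [hF', Finset.mem_erase] at hA
        exact hmeet A hA.2 hA.1
      calc F'.card = ∑ A ∈ F', 1 := by simp
        _ ≤ ∑ A ∈ F', (A ∩ Y).card := Finset.sum_le_sum (fun A hA =>
            Finset.card_pos.mpr (this A hA))
        _ = ∑ A ∈ F', ∑ y ∈ Y, (if y ∈ A then 1 else 0) := by
            refine Finset.sum_congr rfl (fun A _ => ?_)
            rw [← Finset.sum_filter, Finset.sum_const, smul_eq_mul, mul_one]
            congr 1
            ext y
            simp [mem_inter, and_comm]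
        _ = ∑ y ∈ Y, ∑ A ∈ F', (if y ∈ A then 1 else 0) := Finset.sum_comm
        _ = ∑ y ∈ Y, (F'.filter (fun A => y ∈ A)).card := by
            refine Finset.sum_congr rfl (fun y _ => ?_)
            rw [Finset.card_filter]
    obtain ⟨y, hyY, hy⟩ : ∃ y ∈ Y, sfB k s ≤ (F'.filter (fun A => y ∈ A)).card := by
      by_contra hcon
      push_neg at hcon
      have h1 : ∑ y ∈ Y, (F'.filter (fun A => y ∈ A)).card ≤ Y.card * (sfB k s - 1) := by
        rw [← smul_eq_mul, ← Finset.sum_const]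
        exact Finset.sum_le_sum (fun y hy => by have := hcon y hy; omega)
      have hB1 := sfB_pos k s
      have hBig : (k+1)*(s+1)*(sfB k s) + 1 ≤ F.card := by
        simpa [sfB] using hcard
      obtain ⟨B', hB'⟩ : ∃ B', sfB k s = B' + 1 := ⟨sfB k s - 1, by omega⟩
      have hsf : sfB (k+1) s = (k+1)*(s+1)*(sfB k s) + 1 := rfl
      have h2 : Y.card * (sfB k s - 1) ≤ ((k+1)*s) * (sfB k s - 1) :=
        Nat.mul_le_mul_right _ hYcard
      rw [hB'] at h1 h2 hsf
      simp only [Nat.add_sub_cancel] at h1 h2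
      rw [hsf] at hF'card
      have hF2 : (k+1)*(s+1)*(B'+1) ≤ F'.card := by omega
      nlinarith [hF2, hsum, h1, h2]
    -- recurse on the family with y removed
    set Fy : Finset (Finset X) := (F'.filter (fun A => y ∈ A)).image (fun A => A.erase y)
      with hFy
    have hFycard : (F'.filter (fun A => y ∈ A)).card = Fy.card := by
      rw [hFy]
      rw [Finset.card_image_of_injOn]
      intro A hA B hB hAB
      simp only [Finset.coe_filter, Set.mem_setOf_eq, Finset.mem_coe] at hA hB
      rw [← Finset.insert_erase hA.2, ← Finset.insert_erase hB.2]
      exact congrArg (insert y) hAB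
    have hFysize : ∀ B ∈ Fy, B.card ≤ k := by
      intro B hB
      rw [hFy, Finset.mem_image] at hB
      obtain ⟨A, hA, rfl⟩ := hB
      rw [Finset.mem_filter] at hA
      have : A.card ≤ k + 1 := hsize A (Finset.mem_of_mem_erase (hF' ▸ hA.1))
      have := Finset.card_erase_of_mem hA.2
      omega
    obtain ⟨c, G', hG'sub, hG'card, hG'pair⟩ := ih s Fy hFysize (by omega)
    refine ⟨insert y c, G'.image (insert y), ?_, ?_, ?_⟩
    · intro B hB
      rw [Finset.mem_image] at hB
      obtain ⟨A, hA, rfl⟩ := hB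
      have := hG'sub hA
      rw [hFy, Finset.mem_image] at this
      obtain ⟨A', hA', hAe⟩ := this
      rw [Finset.mem_filter] at hA'
      rw [← hAe, Finset.insert_erase hA'.2]
      exact Finset.mem_of_mem_erase (hF' ▸ hA'.1)
    · have hinj : Set.InjOn (insert y) (↑G' : Set (Finset X)) := by
        intro A hA B hB hAB
        have hyA : y ∉ A := by
          have := hG'sub (Finset.mem_coe.mp hA)
          rw [hFy, Finset.mem_image] at this
          obtain ⟨A', _, rfl⟩ := this
          exact Finset.notMem_erase _ _
        have hyB : y ∉ B := by
          have := hG'sub (Finset.mem_coe.mp hB)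
          rw [hFy, Finset.mem_image] at this
          obtain ⟨B', _, rfl⟩ := this
          exact Finset.notMem_erase _ _
        rw [← Finset.erase_insert hyA, ← Finset.erase_insert hyB, hAB]
      rw [Finset.card_image_of_injOn hinj]
      exact hG'card
    · intro A hA B hB hAB
      rw [Finset.mem_image] at hA hB
      obtain ⟨A', hA', rfl⟩ := hA
      obtain ⟨B', hB', rfl⟩ := hB
      have hyA : y ∉ A' := by
        have := hG'sub hA'
        rw [hFy, Finset.mem_image] at this
        obtain ⟨A'', _, rfl⟩ := this
        exact Finset.notMem_erase _ _
      have hyB : y ∉ B' := by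
        have := hG'sub hB'
        rw [hFy, Finset.mem_image] at this
        obtain ⟨B'', _, rfl⟩ := this
        exact Finset.notMem_erase _ _
      have hne : A' ≠ B' := by
        intro h; exact hAB (by rw [h])
      have := hG'pair A' hA' B' hB' hne
      ext a
      simp only [Finset.mem_inter, Finset.mem_insert]
      constructor
      · rintro ⟨h1 | h1, h2 | h2⟩
        · exact Or.inl h1
        · exact Or.inl h1
        · exact Or.inl h2
        · exact Or.inr (this ▸ Finset.mem_inter.mpr ⟨h1, h2⟩)
      · rintro (rfl | h)
        · exact ⟨Or.inl rfl, Or.inl rfl⟩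
        · have := Finset.mem_inter.mp (this ▸ h)
          exact ⟨Or.inr this.1, Or.inr this.2⟩

/-- Independent sets in digraphs with bounded out-degree. -/
lemma digraph_indep {α : Type*} [DecidableEq α] (Δ : ℕ) :
    ∀ (n : ℕ) (S : Finset α) (Out : α → Finset α), (∀ p ∈ S, (Out p).card ≤ Δ) →
    (2*Δ+1) * n ≤ S.card →
    ∃ U ⊆ S, U.card = n ∧ ∀ p ∈ U, ∀ q ∈ U, p ≠ q → q ∉ Out p := by
  intro n
  induction n with
  | zero => intro S Out _ _; exact ⟨∅, empty_subset _, card_empty, by simp⟩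
  | succ n ih =>
    intro S Out hout hcard
    classical
    have hSne : S.Nonempty := by
      rw [← card_pos]; nlinarith
    -- find a vertex of small total degree
    set deg : α → ℕ := fun p => (Out p ∩ S).card + (S.filter (fun q => p ∈ Out q)).card
      with hdeg
    have hsum : ∑ p ∈ S, deg p ≤ 2*Δ * S.card := by
      have h1 : ∑ p ∈ S, (Out p ∩ S).card ≤ Δ * S.card := by
        calc ∑ p ∈ S, (Out p ∩ S).card ≤ ∑ p ∈ S, Δ :=
              Finset.sum_le_sum (fun p hp =>
                le_trans (card_le_card inter_subset_left) (hout p hp))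
          _ = Δ * S.card := by rw [Finset.sum_const, smul_eq_mul, Nat.mul_comm]
      have h2 : ∑ p ∈ S, (S.filter (fun q => p ∈ Out q)).card ≤ Δ * S.card := by
        have hswap : ∑ p ∈ S, (S.filter (fun q => p ∈ Out q)).card
            = ∑ q ∈ S, (S.filter (fun p => p ∈ Out q)).card := by
          simp only [Finset.card_filter]
          exact Finset.sum_comm
        rw [hswap]
        calc ∑ q ∈ S, (S.filter (fun p => p ∈ Out q)).card ≤ ∑ q ∈ S, Δ :=
              Finset.sum_le_sum (fun q hq =>
                le_trans (card_le_card (fun x hx => (mem_filter.mp hx).2)) (hout q hq))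
          _ = Δ * S.card := by rw [Finset.sum_const, smul_eq_mul, Nat.mul_comm]
      calc ∑ p ∈ S, deg p = ∑ p ∈ S, (Out p ∩ S).card
            + ∑ p ∈ S, (S.filter (fun q => p ∈ Out q)).card := Finset.sum_add_distrib
        _ ≤ 2*Δ * S.card := by
            have hr : Δ * S.card + Δ * S.card = 2*Δ*S.card := by ring
            omega
    obtain ⟨p, hpS, hpdeg⟩ : ∃ p ∈ S, deg p ≤ 2*Δ := by
      by_contra hcon
      push_neg at hcon
      have : (2*Δ+1) * S.card ≤ ∑ p ∈ S, deg p := by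
        calc (2*Δ+1) * S.card = ∑ _p ∈ S, (2*Δ+1) := by
              rw [Finset.sum_const, smul_eq_mul, Nat.mul_comm]
          _ ≤ ∑ p ∈ S, deg p := Finset.sum_le_sum (fun p hp => hcon p hp)
      have hpos : 0 < S.card := card_pos.mpr hSne
      nlinarith
    set Nb : Finset α := insert p ((Out p ∩ S) ∪ S.filter (fun q => p ∈ Out q)) with hNb
    have hNbcard : Nb.card ≤ 2*Δ + 1 := by
      calc Nb.card ≤ ((Out p ∩ S) ∪ S.filter (fun q => p ∈ Out q)).card + 1 :=
            card_insert_le _ _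
        _ ≤ (Out p ∩ S).card + (S.filter (fun q => p ∈ Out q)).card + 1 := by
            have := card_union_le (Out p ∩ S) (S.filter (fun q => p ∈ Out q))
            omega
        _ ≤ 2*Δ + 1 := by
            have hpdeg' : (Out p ∩ S).card + (S.filter (fun q => p ∈ Out q)).card ≤ 2*Δ :=
              hpdeg
            omega
    have hS' : (2*Δ+1) * n ≤ (S \ Nb).card := by
      have h1 : S.card ≤ (S \ Nb).card + Nb.card := Finset.card_le_card_sdiff_add_card
      have h2 : (2*Δ+1)*(n+1) = (2*Δ+1)*n + (2*Δ+1) := by ring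
      omega
    obtain ⟨U', hU'sub, hU'card, hU'ind⟩ := ih (S \ Nb) Out
      (fun q hq => hout q (mem_sdiff.mp hq).1) hS'
    refine ⟨insert p U', ?_, ?_, ?_⟩
    · intro q hq
      rcases mem_insert.mp hq with rfl | hq
      · exact hpS
      · exact (mem_sdiff.mp (hU'sub hq)).1
    · have hpU' : p ∉ U' := by
        intro h
        have := (mem_sdiff.mp (hU'sub h)).2
        exact this (mem_insert_self _ _)
      rw [card_insert_of_notMem hpU', hU'card]
    · intro a ha b hb hab
      rcases mem_insert.mp ha with ha' | ha' <;> rcases mem_insert.mp hb with hb' | hb'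
      · exact absurd (ha'.trans hb'.symm) hab
      · -- a = p, b ∈ U'
        subst ha'
        intro hmem
        have hbS : b ∈ S := (mem_sdiff.mp (hU'sub hb')).1
        have := (mem_sdiff.mp (hU'sub hb')).2
        exact this (mem_insert_of_mem (mem_union_left _ (mem_inter.mpr ⟨hmem, hbS⟩)))
      · -- a ∈ U', b = p
        subst hb'
        intro hmem
        have haS : a ∈ S := (mem_sdiff.mp (hU'sub ha')).1
        have := (mem_sdiff.mp (hU'sub ha')).2
        exact this (mem_insert_of_mem (mem_union_right _ (mem_filter.mpr ⟨haS, hmem⟩)))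
      · exact hU'ind a ha' b hb' hab

/-- Greedy selection avoiding a symmetric bounded "bad triple" relation. -/
lemma hyper_indep {α : Type*} [DecidableEq α] (E n : ℕ) (S : Finset α)
    (Bad : α → α → Finset α)
    (hcard : ∀ p ∈ S, ∀ q ∈ S, (Bad p q).card ≤ E)
    (hsym1 : ∀ p ∈ S, ∀ q ∈ S, ∀ r ∈ S, r ∈ Bad p q → r ∈ Bad q p)
    (hsym2 : ∀ p ∈ S, ∀ q ∈ S, ∀ r ∈ S, r ∈ Bad p q → q ∈ Bad p r)
    (hbig : n + E*n*n ≤ S.card) :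
    ∃ U ⊆ S, U.card = n ∧ ∀ p ∈ U, ∀ q ∈ U, ∀ r ∈ U,
      p ≠ q → p ≠ r → q ≠ r → r ∉ Bad p q := by
  classical
  suffices h : ∀ t, t ≤ n → ∃ U ⊆ S, U.card = t ∧ ∀ p ∈ U, ∀ q ∈ U, ∀ r ∈ U,
      p ≠ q → p ≠ r → q ≠ r → r ∉ Bad p q from h n le_rfl
  intro t
  induction t with
  | zero => intro _; exact ⟨∅, empty_subset _, card_empty, by simp⟩
  | succ t ih =>
    intro ht
    obtain ⟨U, hUsub, hUcard, hUgood⟩ := ih (by omega)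
    set Excl : Finset α := U ∪ (U ×ˢ U).biUnion (fun z => Bad z.1 z.2) with hExcl
    have hExclcard : Excl.card < S.card := by
      have h1 : Excl.card ≤ U.card + ∑ z ∈ U ×ˢ U, (Bad z.1 z.2).card := by
        calc Excl.card ≤ U.card + ((U ×ˢ U).biUnion (fun z => Bad z.1 z.2)).card :=
              card_union_le _ _
          _ ≤ U.card + ∑ z ∈ U ×ˢ U, (Bad z.1 z.2).card := by
              have := card_biUnion_le (s := U ×ˢ U) (t := fun z => Bad z.1 z.2)
              omega
      have h2 : ∑ z ∈ U ×ˢ U, (Bad z.1 z.2).card ≤ E * (t * t) := by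
        calc ∑ z ∈ U ×ˢ U, (Bad z.1 z.2).card ≤ ∑ _z ∈ U ×ˢ U, E :=
              Finset.sum_le_sum (fun z hz => by
                rw [Finset.mem_product] at hz
                exact hcard z.1 (hUsub hz.1) z.2 (hUsub hz.2))
          _ = (t * t) * E := by
              rw [Finset.sum_const, smul_eq_mul, Finset.card_product, hUcard]
          _ = E * (t * t) := Nat.mul_comm _ _
      have h3 : E * (t*t) ≤ E * (n*n) :=
        Nat.mul_le_mul_left _ (Nat.mul_le_mul (by omega) (by omega))
      have h4 : E*n*n = E*(n*n) := by ring
      omega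
    obtain ⟨z, hzS, hzE⟩ : ∃ z ∈ S, z ∉ Excl := by
      by_contra hcon
      push_neg at hcon
      exact absurd (card_le_card hcon) (by omega)
    have hzU : z ∉ U := fun h => hzE (mem_union_left _ h)
    have hzBad : ∀ a ∈ U, ∀ b ∈ U, z ∉ Bad a b := by
      intro a ha b hb h
      exact hzE (mem_union_right _ (Finset.mem_biUnion.mpr
        ⟨(a, b), Finset.mem_product.mpr ⟨ha, hb⟩, h⟩))
    refine ⟨insert z U, ?_, ?_, ?_⟩
    · intro q hq
      rcases mem_insert.mp hq with rfl | hq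
      · exact hzS
      · exact hUsub hq
    · rw [card_insert_of_notMem hzU, hUcard]
    · intro a ha b hb c hc hab hac hbc hbad
      rcases mem_insert.mp ha with ha' | ha' <;> rcases mem_insert.mp hb with hb' | hb' <;>
        rcases mem_insert.mp hc with hc' | hc'
      · exact hab (ha'.trans hb'.symm)
      · exact hab (ha'.trans hb'.symm)
      · exact hac (ha'.trans hc'.symm)
      · -- a = z, b c ∈ U : c ∈ Bad z b
        subst ha'
        have h1 : c ∈ Bad b a := hsym1 a hzS b (hUsub hb') c (hUsub hc') hbad
        have h2 : a ∈ Bad b c := hsym2 b (hUsub hb') a hzS c (hUsub hc') h1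
        exact hzBad b hb' c hc' h2
      · exact hbc (hb'.trans hc'.symm)
      · -- b = z, a c ∈ U : c ∈ Bad a z
        subst hb'
        have h2 : b ∈ Bad a c := hsym2 a (hUsub ha') b hzS c (hUsub hc') hbad
        exact hzBad a ha' c hc' h2
      · -- c = z
        subst hc'
        exact hzBad a ha' b hb' hbad
      · exact hUgood a ha' b hb' c hc' hab hac hbc hbad

section Main

variable {X : Type*} [DecidableEq X]

lemma tri_swap01 (a b c : X) : ({b, a, c} : Finset X) = {a, b, c} := by
  ext x; simp only [mem_insert, mem_singleton]; tauto

lemma tri_swap12 (a b c : X) : ({a, c, b} : Finset X) = {a, b, c} := by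
  ext x; simp only [mem_insert, mem_singleton]; tauto

lemma tri_rot (a b c : X) : ({b, c, a} : Finset X) = {a, b, c} := by
  ext x; simp only [mem_insert, mem_singleton]; tauto

lemma isCond3_empty (Γ : Set (Finset X)) : IsCond3 Γ (∅ : Finset (X × ℕ)) := by
  constructor
  · intro a ha; simp at ha
  · intro x0 x1 x2 nn _ _ _ _ h; simp at h

lemma main_extract (Γ : Set (Finset X)) (d : ℕ)
    (hd : ∀ x₀ x₁ : X, {x₂ | ({x₀, x₁, x₂} : Finset X) ∈ Γ}.Finite ∧
      {x₂ | ({x₀, x₁, x₂} : Finset X) ∈ Γ}.ncard ≤ d)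
    (kk ll n : ℕ) (S : Finset (Finset (X × ℕ)))
    (hS : ∀ p ∈ S, IsCond3 Γ p ∧ p.card = kk ∧ ∀ a ∈ p, a.2 < ll)
    (hbig : 2^(kk*ll) * sfB kk (2^(kk*ll) * ((2*(kk*kk*d)+1)*(n + (kk*kk*d)*n*n))) ≤ S.card) :
    ∃ G ⊆ S, G.card = n ∧ IsCond3 Γ (G.sup id) := by
  classical
  set L : ℕ := 2^(kk*ll) with hL
  set Δ : ℕ := kk*kk*d with hΔ
  set N1 : ℕ := n + Δ*n*n with hN1
  set NT : ℕ := (2*Δ+1)*N1 with hNT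
  set sx : ℕ := L*NT with hsx
  have hL1 : 1 ≤ L := Nat.one_le_two_pow
  have hsfB1 := sfB_pos kk sx
  -- degenerate cases
  by_cases hn0 : n = 0
  · subst hn0
    exact ⟨∅, Finset.empty_subset _, Finset.card_empty, by
      rw [Finset.sup_empty]; exact isCond3_empty Γ⟩
  by_cases hn1 : n = 1
  · subst hn1
    have hpos : 0 < L * sfB kk sx := Nat.mul_pos (by omega) (by omega)
    obtain ⟨p, hp⟩ := Finset.card_pos.mp (show 0 < S.card by omega)
    refine ⟨{p}, Finset.singleton_subset_iff.mpr hp, Finset.card_singleton _, ?_⟩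
    rw [Finset.sup_singleton]
    exact (hS p hp).1
  have hn2 : 2 ≤ n := by omega
  have hN1n : n ≤ N1 := by rw [hN1]; omega
  have hNTge : N1 ≤ NT := by
    calc N1 = 1 * N1 := (one_mul _).symm
      _ ≤ (2*Δ+1) * N1 := Nat.mul_le_mul_right _ (by omega)
  have hNT2 : 2 ≤ NT := by omega
  have hsx1 : 1 ≤ sx := by
    rw [hsx]
    exact Nat.mul_pos (by omega) (by omega)
  set dom : Finset (X × ℕ) → Finset X := fun p => p.image Prod.fst with hdom
  have h_dcard : ∀ p ∈ S, (dom p).card = kk := by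
    intro p hp
    rw [hdom]
    rw [Finset.card_image_of_injOn (fun a ha b hb h => (hS p hp).1.1 a ha b hb h)]
    exact (hS p hp).2.1
  have hmemdom : ∀ (p : Finset (X × ℕ)) (x : X) (mm : ℕ), (x, mm) ∈ p → x ∈ dom p := by
    intro p x mm h
    exact Finset.mem_image.mpr ⟨(x, mm), h, rfl⟩
  set Dfam : Finset (Finset X) := S.image dom with hDfamdef
  have hDfam : sfB kk sx ≤ Dfam.card := by
    have hfib : ∀ D ∈ Dfam, (S.filter (fun p => dom p = D)).card ≤ L := by
      intro D hD
      obtain ⟨p0, hp0, hp0D⟩ := Finset.mem_image.mp hD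
      have hsub : S.filter (fun p => dom p = D) ⊆ (D ×ˢ Finset.range ll).powerset := by
        intro p hp
        rw [Finset.mem_filter] at hp
        rw [Finset.mem_powerset]
        intro a ha
        rw [Finset.mem_product]
        constructor
        · rw [← hp.2]
          exact Finset.mem_image.mpr ⟨a, ha, rfl⟩
        · exact Finset.mem_range.mpr ((hS p hp.1).2.2 a ha)
      calc (S.filter (fun p => dom p = D)).card ≤ (D ×ˢ Finset.range ll).powerset.card :=
            Finset.card_le_card hsub
        _ = 2^(D.card * ll) := by
            rw [Finset.card_powerset, Finset.card_product, Finset.card_range]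
        _ = L := by rw [← hp0D, h_dcard p0 hp0, hL]
    have h1 : S.card ≤ L * Dfam.card := Finset.card_le_mul_card_image S L hfib
    have h2 : L * sfB kk sx ≤ L * Dfam.card := le_trans hbig h1
    exact Nat.le_of_mul_le_mul_left h2 (by omega)
  obtain ⟨c, G₀, hG₀sub, hG₀card, hG₀pair⟩ := sunflower_lemma kk sx Dfam
    (fun A hA => by obtain ⟨p, hp, rfl⟩ := Finset.mem_image.mp hA; exact le_of_eq (h_dcard p hp))
    hDfam
  set g : Finset X → Finset (X × ℕ) :=
    fun D => if h : ∃ p ∈ S, dom p = D then h.choose else ∅ with hgdef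
  have hg : ∀ D ∈ Dfam, g D ∈ S ∧ dom (g D) = D := by
    intro D hD
    obtain ⟨p, hp, hpD⟩ := Finset.mem_image.mp hD
    have hex : ∃ p ∈ S, dom p = D := ⟨p, hp, hpD⟩
    rw [hgdef]
    simp only [dif_pos hex]
    exact ⟨hex.choose_spec.1, hex.choose_spec.2⟩
  have hcsub : ∀ A ∈ G₀, c ⊆ A := by
    intro A hA
    obtain ⟨B, hB, hBA⟩ := Finset.exists_mem_ne (show 1 < G₀.card by omega) A
    rw [← hG₀pair A hA B hB (Ne.symm hBA)]
    exact Finset.inter_subset_left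
  have hccard : c.card ≤ kk := by
    obtain ⟨A, hA⟩ := Finset.card_pos.mp (by omega : 0 < G₀.card)
    obtain ⟨p, hp, rfl⟩ := Finset.mem_image.mp (hG₀sub hA)
    exact le_of_le_of_eq (Finset.card_le_card (hcsub _ hA)) (h_dcard p hp)
  -- pigeonhole on the core restriction
  set φ : Finset X → Finset (X × ℕ) := fun D => (g D).filter (fun a => a.1 ∈ c) with hφ
  set Tgt : Finset (Finset (X × ℕ)) := (c ×ˢ Finset.range ll).powerset with hTgt
  have hmapsφ : ∀ D ∈ G₀, φ D ∈ Tgt := by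
    intro D hD
    rw [hTgt, Finset.mem_powerset]
    intro a ha
    rw [hφ] at ha
    rw [Finset.mem_filter] at ha
    rw [Finset.mem_product]
    exact ⟨ha.2, Finset.mem_range.mpr ((hS _ (hg D (hG₀sub hD)).1).2.2 a ha.1)⟩
  have hTgtcard : Tgt.card ≤ L := by
    rw [hTgt, Finset.card_powerset, Finset.card_product, Finset.card_range, hL]
    exact Nat.pow_le_pow_right (by omega) (Nat.mul_le_mul_right ll hccard)
  obtain ⟨ρ, hρ, hfibρ⟩ := Finset.exists_le_card_fiber_of_mul_le_card_of_maps_to hmapsφ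
    ⟨∅, by rw [hTgt]; exact Finset.empty_mem_powerset _⟩
    (n := NT)
    (by calc Tgt.card * NT ≤ L * NT := Nat.mul_le_mul_right NT hTgtcard
          _ = sx := hsx.symm
          _ ≤ G₀.card := Nat.le_of_succ_le hG₀card)
  set G₁ : Finset (Finset X) := G₀.filter (fun D => φ D = ρ) with hG₁
  have hG₁sub : G₁ ⊆ G₀ := Finset.filter_subset _ _
  have hG₁card : NT ≤ G₁.card := hfibρ
  set T : Finset (Finset (X × ℕ)) := G₁.image g with hT
  have hTmem : ∀ p ∈ T, ∃ D ∈ G₁, g D = p ∧ dom p = D := by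
    intro p hp
    obtain ⟨D, hD, rfl⟩ := Finset.mem_image.mp hp
    exact ⟨D, hD, rfl, (hg D (hG₀sub (hG₁sub hD))).2⟩
  have hTS : ∀ p ∈ T, p ∈ S := by
    intro p hp
    obtain ⟨D, hD, rfl, _⟩ := hTmem p hp
    exact (hg D (hG₀sub (hG₁sub hD))).1
  have hTcard : NT ≤ T.card := by
    rw [hT, Finset.card_image_of_injOn]
    · exact hG₁card
    · intro D hD D' hD' h
      rw [← (hg D (hG₀sub (hG₁sub (Finset.mem_coe.mp hD)))).2, h,
        (hg D' (hG₀sub (hG₁sub (Finset.mem_coe.mp hD')))).2]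
  have hTdom : ∀ p ∈ T, ∀ q ∈ T, p ≠ q → (dom p) ∩ (dom q) = c := by
    intro p hp q hq hpq
    obtain ⟨D, hD, rfl, hDp⟩ := hTmem p hp
    obtain ⟨D', hD', rfl, hDq⟩ := hTmem q hq
    rw [hDp, hDq]
    exact hG₀pair D (hG₁sub hD) D' (hG₁sub hD') (fun h => hpq (by rw [h]))
  have hTcore : ∀ p ∈ T, p.filter (fun a => a.1 ∈ c) = ρ := by
    intro p hp
    obtain ⟨D, hD, rfl, _⟩ := hTmem p hp
    exact (Finset.mem_filter.mp hD).2
  -- master functionality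
  have hfun2 : ∀ p ∈ T, ∀ q ∈ T, ∀ a ∈ p, ∀ b ∈ q, a.1 = b.1 → a = b := by
    intro p hp q hq a ha b hb hab
    by_cases hpq : p = q
    · subst hpq
      exact (hS p (hTS p hp)).1.1 a ha b hb hab
    · have hac : a.1 ∈ c := by
        rw [← hTdom p hp q hq hpq]
        exact Finset.mem_inter.mpr ⟨hmemdom p a.1 a.2 (by simpa using ha),
          by rw [hab]; exact hmemdom q b.1 b.2 (by simpa using hb)⟩
      have h1 : a ∈ p.filter (fun a => a.1 ∈ c) := Finset.mem_filter.mpr ⟨ha, hac⟩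
      rw [hTcore p hp, ← hTcore q hq] at h1
      exact (hS q (hTS q hq)).1.1 a (Finset.mem_filter.mp h1).1 b hb hab
  have hmaster : ∀ p ∈ T, ∀ q ∈ T, ∀ x mm, (x, mm) ∈ q → x ∈ dom p → (x, mm) ∈ p := by
    intro p hp q hq x mm hq' hx
    obtain ⟨b, hb, hb1⟩ := Finset.mem_image.mp hx
    have := hfun2 p hp q hq b hb (x, mm) hq' hb1
    rw [← this]; exact hb
  -- counting candidates
  have hcands : ∀ p q : Finset (X × ℕ), p ∈ T → q ∈ T →
      ((dom p ×ˢ dom q).biUnion (fun z => (hd z.1 z.2).1.toFinset)).card ≤ Δ := by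
    intro p q hp hq
    calc ((dom p ×ˢ dom q).biUnion (fun z => (hd z.1 z.2).1.toFinset)).card
        ≤ ∑ z ∈ dom p ×ˢ dom q, ((hd z.1 z.2).1.toFinset).card := Finset.card_biUnion_le
      _ ≤ ∑ _z ∈ dom p ×ˢ dom q, d := Finset.sum_le_sum (fun z _ => by
          rw [← Set.ncard_eq_toFinset_card _ (hd z.1 z.2).1]
          exact (hd z.1 z.2).2)
      _ = (kk * kk) * d := by
          rw [Finset.sum_const, smul_eq_mul, Finset.card_product,
            h_dcard p (hTS p hp), h_dcard q (hTS q hq)]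
      _ = Δ := by rw [hΔ, Nat.mul_assoc]
  -- pair conflicts
  set OutP : Finset (X × ℕ) → Finset (X × ℕ) → Prop := fun p q =>
    ∃ z : X × X × X, z.1 ∈ dom p ∧ z.2.1 ∈ dom p ∧ z.2.2 ∈ dom q \ c ∧
      z.1 ≠ z.2.1 ∧ z.1 ≠ z.2.2 ∧ z.2.1 ≠ z.2.2 ∧
      ({z.1, z.2.1, z.2.2} : Finset X) ∈ Γ with hOutP
  set Out : Finset (X × ℕ) → Finset (Finset (X × ℕ)) := fun p => T.filter (OutP p) with hOut
  have hOutcard : ∀ p ∈ T, (Out p).card ≤ Δ := by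
    intro p hp
    have hw : ∀ q ∈ Out p, OutP p q := fun q hq => (Finset.mem_filter.mp hq).2
    have step : (Out p).card ≤ ((dom p ×ˢ dom p).biUnion
        (fun z => (hd z.1 z.2).1.toFinset)).card := by
      rw [← Finset.card_attach (s := Out p)]
      apply Finset.card_le_card_of_injOn (fun q => (hw q.1 q.2).choose.2.2)
      · intro q _
        have hspec := (hw q.1 q.2).choose_spec
        apply Finset.mem_biUnion.mpr
        refine ⟨((hw q.1 q.2).choose.1, (hw q.1 q.2).choose.2.1),
          Finset.mem_product.mpr ⟨hspec.1, hspec.2.1⟩, ?_⟩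
        rw [Set.Finite.mem_toFinset]
        exact hspec.2.2.2.2.2.2
      · intro q1 hq1 q2 hq2 heq
        by_contra hne
        have hne' : q1.1 ≠ q2.1 := fun h => hne (Subtype.ext h)
        have h1 := (hw q1.1 q1.2).choose_spec.2.2.1
        have h2 := (hw q2.1 q2.2).choose_spec.2.2.1
        have heq' : (hw q1.1 q1.2).choose.2.2 = (hw q2.1 q2.2).choose.2.2 := heq
        have hq1T : q1.1 ∈ T := Finset.filter_subset _ _ q1.2
        have hq2T : q2.1 ∈ T := Finset.filter_subset _ _ q2.2
        have hdd := hTdom q1.1 hq1T q2.1 hq2T hne'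
        have h1' := Finset.mem_sdiff.mp h1
        have h2' := Finset.mem_sdiff.mp h2
        have hin1 : (hw q2.1 q2.2).choose.2.2 ∈ dom q1.1 := heq' ▸ h1'.1
        have hgen : ∀ x : X, x ∈ dom q1.1 → x ∈ dom q2.1 → x ∈ c := by
          intro x hx1 hx2
          rw [← hdd]
          exact Finset.mem_inter.mpr ⟨hx1, hx2⟩
        exact h2'.2 (hgen _ hin1 h2'.1)
    exact le_trans step (hcands p p hp hp)
  obtain ⟨U₁, hU₁T, hU₁card, hU₁ind⟩ := digraph_indep Δ N1 T Out hOutcard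
    (le_trans (le_of_eq hNT.symm) hTcard)
  -- triple conflicts
  set BadP : Finset (X × ℕ) → Finset (X × ℕ) → Finset (X × ℕ) → Prop := fun p q r =>
    ∃ z : X × X × X, z.1 ∈ dom p \ c ∧ z.2.1 ∈ dom q \ c ∧ z.2.2 ∈ dom r \ c ∧
      z.1 ≠ z.2.1 ∧ z.1 ≠ z.2.2 ∧ z.2.1 ≠ z.2.2 ∧
      ({z.1, z.2.1, z.2.2} : Finset X) ∈ Γ with hBadP
  set Bad : Finset (X × ℕ) → Finset (X × ℕ) → Finset (Finset (X × ℕ)) :=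
    fun p q => U₁.filter (BadP p q) with hBad
  have hBadcard : ∀ p ∈ U₁, ∀ q ∈ U₁, (Bad p q).card ≤ Δ := by
    intro p hp q hq
    have hw : ∀ r ∈ Bad p q, BadP p q r := fun r hr => (Finset.mem_filter.mp hr).2
    have step : (Bad p q).card ≤ ((dom p ×ˢ dom q).biUnion
        (fun z => (hd z.1 z.2).1.toFinset)).card := by
      rw [← Finset.card_attach (s := Bad p q)]
      apply Finset.card_le_card_of_injOn (fun r => (hw r.1 r.2).choose.2.2)
      · intro r _
        have hspec := (hw r.1 r.2).choose_spec
        apply Finset.mem_biUnion.mpr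
        refine ⟨((hw r.1 r.2).choose.1, (hw r.1 r.2).choose.2.1),
          Finset.mem_product.mpr ⟨(Finset.mem_sdiff.mp hspec.1).1,
            (Finset.mem_sdiff.mp hspec.2.1).1⟩, ?_⟩
        rw [Set.Finite.mem_toFinset]
        exact hspec.2.2.2.2.2.2
      · intro r1 hr1 r2 hr2 heq
        by_contra hne
        have hne' : r1.1 ≠ r2.1 := fun h => hne (Subtype.ext h)
        have h1 := (hw r1.1 r1.2).choose_spec.2.2.1
        have h2 := (hw r2.1 r2.2).choose_spec.2.2.1
        have heq' : (hw r1.1 r1.2).choose.2.2 = (hw r2.1 r2.2).choose.2.2 := heq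
        have hr1T : r1.1 ∈ T := hU₁T (Finset.filter_subset _ _ r1.2)
        have hr2T : r2.1 ∈ T := hU₁T (Finset.filter_subset _ _ r2.2)
        have hdd := hTdom r1.1 hr1T r2.1 hr2T hne'
        have h1' := Finset.mem_sdiff.mp h1
        have h2' := Finset.mem_sdiff.mp h2
        have hin1 : (hw r2.1 r2.2).choose.2.2 ∈ dom r1.1 := heq' ▸ h1'.1
        have hgen : ∀ x : X, x ∈ dom r1.1 → x ∈ dom r2.1 → x ∈ c := by
          intro x hx1 hx2
          rw [← hdd]
          exact Finset.mem_inter.mpr ⟨hx1, hx2⟩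
        exact h2'.2 (hgen _ hin1 h2'.1)
    exact le_trans step (hcands p q (hU₁T hp) (hU₁T hq))
  have hsym1 : ∀ p ∈ U₁, ∀ q ∈ U₁, ∀ r ∈ U₁, r ∈ Bad p q → r ∈ Bad q p := by
    intro p _ q _ r _ hbad
    obtain ⟨hrU, z, h1, h2, h3, h12, h13, h23, hE⟩ := Finset.mem_filter.mp hbad
    refine Finset.mem_filter.mpr ⟨hrU, (z.2.1, z.1, z.2.2), h2, h1, h3,
      Ne.symm h12, h23, h13, ?_⟩
    rw [tri_swap01]
    exact hE
  have hsym2 : ∀ p ∈ U₁, ∀ q ∈ U₁, ∀ r ∈ U₁, r ∈ Bad p q → q ∈ Bad p r := by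
    intro p _ q hq r _ hbad
    obtain ⟨hrU, z, h1, h2, h3, h12, h13, h23, hE⟩ := Finset.mem_filter.mp hbad
    refine Finset.mem_filter.mpr ⟨hq, (z.1, z.2.2, z.2.1), h1, h3, h2,
      h13, h12, Ne.symm h23, ?_⟩
    rw [tri_swap12]
    exact hE
  obtain ⟨U, hUU₁, hUcard, hUgood⟩ := hyper_indep Δ n U₁ Bad hBadcard hsym1 hsym2
    (by rw [hU₁card])
  have hUT : U ⊆ T := fun p hp => hU₁T (hUU₁ hp)
  refine ⟨U, fun p hp => hTS p (hUT hp), hUcard, ?_⟩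
  -- the union of U is a condition
  have hmemsup : ∀ a : X × ℕ, a ∈ U.sup id → ∃ p ∈ U, a ∈ p := by
    intro a ha
    obtain ⟨p, hp, hap⟩ := Finset.mem_sup.mp ha
    exact ⟨p, hp, hap⟩
  -- pairwise unions are conditions
  have key2 : ∀ p ∈ U, ∀ q ∈ U, IsCond3 Γ (p ∪ q) := by
    intro p hp q hq
    by_cases hpq : p = q
    · subst hpq
      rw [Finset.union_self]
      exact (hS p (hTS p (hUT hp))).1
    have hpT : p ∈ T := hUT hp
    have hqT : q ∈ T := hUT hq
    have hdompq : dom p ∩ dom q = c := hTdom p hpT q hqT hpq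
    have hcp : c ⊆ dom p := by rw [← hdompq]; exact Finset.inter_subset_left
    have hcq : c ⊆ dom q := by rw [← hdompq]; exact Finset.inter_subset_right
    constructor
    · intro a ha b hb hab
      rcases Finset.mem_union.mp ha with h1 | h1 <;> rcases Finset.mem_union.mp hb with h2 | h2
      · exact hfun2 p hpT p hpT a h1 b h2 hab
      · exact hfun2 p hpT q hqT a h1 b h2 hab
      · exact hfun2 q hqT p hpT a h1 b h2 hab
      · exact hfun2 q hqT q hqT a h1 b h2 hab
    intro y0 y1 y2 mm h01 h02 h12 hE ⟨m0, m1, m2⟩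
    have shp : ∀ x mmm, (x, mmm) ∈ p ∪ q → x ∈ dom p → (x, mmm) ∈ p := by
      intro x mmm hx hxd
      rcases Finset.mem_union.mp hx with h | h
      · exact h
      · exact hmaster p hpT q hqT x mmm h hxd
    have shq : ∀ x mmm, (x, mmm) ∈ p ∪ q → x ∈ dom q → (x, mmm) ∈ q := by
      intro x mmm hx hxd
      rcases Finset.mem_union.mp hx with h | h
      · exact hmaster q hqT p hpT x mmm h hxd
      · exact h
    have hqside : ∀ x mmm, (x, mmm) ∈ p ∪ q → x ∉ dom p → (x, mmm) ∈ q ∧ x ∈ dom q \ c := by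
      intro x mmm hx hxd
      have hxq : (x, mmm) ∈ q := by
        rcases Finset.mem_union.mp hx with h | h
        · exact absurd (hmemdom p x mmm h) hxd
        · exact h
      exact ⟨hxq, Finset.mem_sdiff.mpr ⟨hmemdom q x mmm hxq, fun hc => hxd (hcp hc)⟩⟩
    by_cases d0 : y0 ∈ dom p <;> by_cases d1 : y1 ∈ dom p <;> by_cases d2 : y2 ∈ dom p
    · exact (hS p (hTS p hpT)).1.2 y0 y1 y2 mm h01 h02 h12 hE
        ⟨shp y0 mm m0 d0, shp y1 mm m1 d1, shp y2 mm m2 d2⟩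
    · -- y0 y1 ∈ dom p, y2 not
      refine absurd (Finset.mem_filter.mpr ⟨hqT, (y0, y1, y2), d0, d1,
        (hqside y2 mm m2 d2).2, h01, h02, h12, hE⟩)
        (hU₁ind p (hUU₁ hp) q (hUU₁ hq) hpq)
    · -- y0 y2 ∈ dom p, y1 not
      refine absurd (Finset.mem_filter.mpr ⟨hqT, (y0, y2, y1), d0, d2,
        (hqside y1 mm m1 d1).2, h02, h01, Ne.symm h12, by rw [tri_swap12]; exact hE⟩)
        (hU₁ind p (hUU₁ hp) q (hUU₁ hq) hpq)
    · -- y0 ∈ dom p only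
      by_cases e0 : y0 ∈ dom q
      · exact (hS q (hTS q hqT)).1.2 y0 y1 y2 mm h01 h02 h12 hE
          ⟨shq y0 mm m0 e0, (hqside y1 mm m1 d1).1, (hqside y2 mm m2 d2).1⟩
      · have hy0 : y0 ∈ dom p \ c := Finset.mem_sdiff.mpr ⟨d0, fun hc => e0 (hcq hc)⟩
        have hy1 : y1 ∈ dom q := hmemdom q y1 mm (hqside y1 mm m1 d1).1
        have hy2 : y2 ∈ dom q := hmemdom q y2 mm (hqside y2 mm m2 d2).1
        refine absurd (Finset.mem_filter.mpr ⟨hpT, (y1, y2, y0), hy1, hy2, hy0,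
          h12, Ne.symm h01, Ne.symm h02, by rw [tri_rot]; exact hE⟩)
          (hU₁ind q (hUU₁ hq) p (hUU₁ hp) (Ne.symm hpq))
    · -- y1 y2 ∈ dom p, y0 not
      refine absurd (Finset.mem_filter.mpr ⟨hqT, (y1, y2, y0), d1, d2,
        (hqside y0 mm m0 d0).2, h12, Ne.symm h01, Ne.symm h02, by rw [tri_rot]; exact hE⟩)
        (hU₁ind p (hUU₁ hp) q (hUU₁ hq) hpq)
    · -- y1 ∈ dom p only
      by_cases e1 : y1 ∈ dom q
      · exact (hS q (hTS q hqT)).1.2 y0 y1 y2 mm h01 h02 h12 hE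
          ⟨(hqside y0 mm m0 d0).1, shq y1 mm m1 e1, (hqside y2 mm m2 d2).1⟩
      · have hy1 : y1 ∈ dom p \ c := Finset.mem_sdiff.mpr ⟨d1, fun hc => e1 (hcq hc)⟩
        have hy0 : y0 ∈ dom q := hmemdom q y0 mm (hqside y0 mm m0 d0).1
        have hy2 : y2 ∈ dom q := hmemdom q y2 mm (hqside y2 mm m2 d2).1
        refine absurd (Finset.mem_filter.mpr ⟨hpT, (y0, y2, y1), hy0, hy2, hy1,
          h02, h01, Ne.symm h12, by rw [tri_swap12]; exact hE⟩)
          (hU₁ind q (hUU₁ hq) p (hUU₁ hp) (Ne.symm hpq))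
    · -- y2 ∈ dom p only
      by_cases e2 : y2 ∈ dom q
      · exact (hS q (hTS q hqT)).1.2 y0 y1 y2 mm h01 h02 h12 hE
          ⟨(hqside y0 mm m0 d0).1, (hqside y1 mm m1 d1).1, shq y2 mm m2 e2⟩
      · have hy2 : y2 ∈ dom p \ c := Finset.mem_sdiff.mpr ⟨d2, fun hc => e2 (hcq hc)⟩
        have hy0 : y0 ∈ dom q := hmemdom q y0 mm (hqside y0 mm m0 d0).1
        have hy1 : y1 ∈ dom q := hmemdom q y1 mm (hqside y1 mm m1 d1).1
        refine absurd (Finset.mem_filter.mpr ⟨hpT, (y0, y1, y2), hy0, hy1, hy2,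
          h01, h02, h12, hE⟩)
          (hU₁ind q (hUU₁ hq) p (hUU₁ hp) (Ne.symm hpq))
    · -- none in dom p
      exact (hS q (hTS q hqT)).1.2 y0 y1 y2 mm h01 h02 h12 hE
        ⟨(hqside y0 mm m0 d0).1, (hqside y1 mm m1 d1).1, (hqside y2 mm m2 d2).1⟩
  -- triple unions are conditions
  have key3 : ∀ p ∈ U, ∀ q ∈ U, ∀ r ∈ U, IsCond3 Γ (p ∪ q ∪ r) := by
    intro p hp q hq r hr
    by_cases hpq : p = q
    · subst hpq
      rw [Finset.union_self]
      exact key2 p hp r hr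
    by_cases hqr : q = r
    · subst hqr
      rw [Finset.union_assoc, Finset.union_self]
      exact key2 p hp q hq
    by_cases hpr : p = r
    · subst hpr
      rw [Finset.union_right_comm, Finset.union_self]
      exact key2 p hp q hq
    have hpT : p ∈ T := hUT hp
    have hqT : q ∈ T := hUT hq
    have hrT : r ∈ T := hUT hr
    have hmem3 : ∀ a : X × ℕ, a ∈ p ∪ q ∪ r → a ∈ p ∨ a ∈ q ∨ a ∈ r := by
      intro a ha
      rcases Finset.mem_union.mp ha with h | h
      · rcases Finset.mem_union.mp h with h' | h'
        · exact Or.inl h'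
        · exact Or.inr (Or.inl h')
      · exact Or.inr (Or.inr h)
    have hinT : ∀ a : X × ℕ, a ∈ p ∪ q ∪ r → ∃ t ∈ T, a ∈ t := by
      intro a ha
      rcases hmem3 a ha with h | h | h
      · exact ⟨p, hpT, h⟩
      · exact ⟨q, hqT, h⟩
      · exact ⟨r, hrT, h⟩
    constructor
    · intro a ha b hb hab
      obtain ⟨t, ht, hat⟩ := hinT a ha
      obtain ⟨u, hu, hbu⟩ := hinT b hb
      exact hfun2 t ht u hu a hat b hbu hab
    intro y0 y1 y2 mm h01 h02 h12 hE ⟨m0, m1, m2⟩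
    have hcp : c ⊆ dom p := by
      rw [← hTdom p hpT q hqT hpq]; exact Finset.inter_subset_left
    have hcq : c ⊆ dom q := by
      rw [← hTdom p hpT q hqT hpq]; exact Finset.inter_subset_right
    have hcr : c ⊆ dom r := by
      rw [← hTdom p hpT r hrT hpr]; exact Finset.inter_subset_right
    -- shifting within the triple union
    have hsh : ∀ t, t ∈ T → ∀ x mmm, (x, mmm) ∈ p ∪ q ∪ r → x ∈ dom t → (x, mmm) ∈ t := by
      intro t ht x mmm hx hxd
      obtain ⟨u, hu, hxu⟩ := hinT (x, mmm) hx
      exact hmaster t ht u hu x mmm hxu hxd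
    -- for each pair of the three members, not all points lie in their union
    have hex : ∀ t u : Finset (X × ℕ), t ∈ U → u ∈ U →
        (∀ w ∈ ({y0, y1, y2} : Finset X), w ∈ dom t ∨ w ∈ dom u) → False := by
      intro t u ht hu hall
      have htT := hUT ht
      have huT := hUT hu
      have hmem' : ∀ w : X, w ∈ ({y0, y1, y2} : Finset X) →
          (w, mm) ∈ p ∪ q ∪ r → (w, mm) ∈ t ∪ u := by
        intro w hw hwm
        rcases hall w hw with h | h
        · exact Finset.mem_union_left _ (hsh t htT w mm hwm h)
        · exact Finset.mem_union_right _ (hsh u huT w mm hwm h)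
      exact (key2 t ht u hu).2 y0 y1 y2 mm h01 h02 h12 hE
        ⟨hmem' y0 (by simp) m0, hmem' y1 (by simp) m1, hmem' y2 (by simp) m2⟩
    have hpick : ∀ t u v : Finset (X × ℕ), t ∈ U → u ∈ U → v ∈ U →
        (∀ a : X × ℕ, a ∈ p ∪ q ∪ r → a ∈ t ∨ a ∈ u ∨ a ∈ v) → c ⊆ dom u →
        ∃ w ∈ ({y0, y1, y2} : Finset X), (w, mm) ∈ t ∧ w ∈ dom t \ c ∧
          w ∉ dom u ∧ w ∉ dom v := by
      intro t u v ht hu hv hcov hcu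
      by_contra hcon
      push_neg at hcon
      apply hex u v hu hv
      intro w hw
      by_cases hwu : w ∈ dom u
      · exact Or.inl hwu
      by_cases hwv : w ∈ dom v
      · exact Or.inr hwv
      exfalso
      have hwm : (w, mm) ∈ p ∪ q ∪ r := by
        have : w = y0 ∨ w = y1 ∨ w = y2 := by simpa using hw
        rcases this with rfl | rfl | rfl
        · exact m0
        · exact m1
        · exact m2
      have hwt : (w, mm) ∈ t := by
        rcases hcov _ hwm with h | h | h
        · exact h
        · exact absurd (hmemdom u w mm h) hwu
        · exact absurd (hmemdom v w mm h) hwv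
      have hwc : w ∈ dom t \ c :=
        Finset.mem_sdiff.mpr ⟨hmemdom t w mm hwt, fun hc => hwu (hcu hc)⟩
      exact hwv (hcon w hw hwt hwc hwu)
    obtain ⟨wp, hwpE, hwpm, hwpd, hwpq, hwpr⟩ := hpick p q r hp hq hr
      (fun a ha => hmem3 a ha) hcq
    obtain ⟨wq, hwqE, hwqm, hwqd, hwqp, hwqr⟩ := hpick q p r hq hp hr
      (fun a ha => by rcases hmem3 a ha with h | h | h
                      exacts [Or.inr (Or.inl h), Or.inl h, Or.inr (Or.inr h)]) hcp
    obtain ⟨wr, hwrE, hwrm, hwrd, hwrp, hwrq⟩ := hpick r p q hr hp hq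
      (fun a ha => by rcases hmem3 a ha with h | h | h
                      exacts [Or.inr (Or.inl h), Or.inr (Or.inr h), Or.inl h]) hcp
    have hd1 : wp ≠ wq := fun h => hwpq (h ▸ (Finset.mem_sdiff.mp hwqd).1)
    have hd2 : wp ≠ wr := fun h => hwpr (h ▸ (Finset.mem_sdiff.mp hwrd).1)
    have hd3 : wq ≠ wr := fun h => hwqr (h ▸ (Finset.mem_sdiff.mp hwrd).1)
    have hsub : ({wp, wq, wr} : Finset X) ⊆ {y0, y1, y2} := by
      intro x hx
      rcases Finset.mem_insert.mp hx with rfl | hx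
      · exact hwpE
      rcases Finset.mem_insert.mp hx with rfl | hx
      · exact hwqE
      rw [Finset.mem_singleton] at hx
      exact hx ▸ hwrE
    have hcard3 : ({wp, wq, wr} : Finset X).card = 3 := by
      rw [Finset.card_insert_of_notMem (by simp [hd1, hd2]),
        Finset.card_insert_of_notMem (by simp [hd3]), Finset.card_singleton]
    have hcardy : ({y0, y1, y2} : Finset X).card ≤ 3 := by
      calc ({y0, y1, y2} : Finset X).card ≤ ({y1, y2} : Finset X).card + 1 :=
            Finset.card_insert_le _ _
        _ ≤ (({y2} : Finset X).card + 1) + 1 := by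
            have := Finset.card_insert_le y1 ({y2} : Finset X)
            omega
        _ ≤ 3 := by rw [Finset.card_singleton]
    have hseteq : ({wp, wq, wr} : Finset X) = {y0, y1, y2} :=
      Finset.eq_of_subset_of_card_le hsub (by omega)
    have hedge : ({wp, wq, wr} : Finset X) ∈ Γ := by rw [hseteq]; exact hE
    exact hUgood p hp q hq r hr hpq hpr hqr
      (Finset.mem_filter.mpr ⟨hUU₁ hr, (wp, wq, wr), hwpd, hwqd, hwrd, hd1, hd2, hd3, hedge⟩)
  -- finish
  constructor
  · intro a ha b hb hab
    obtain ⟨p, hp, hap⟩ := hmemsup a ha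
    obtain ⟨q, hq, hbq⟩ := hmemsup b hb
    exact hfun2 p (hUT hp) q (hUT hq) a hap b hbq hab
  intro y0 y1 y2 mm h01 h02 h12 hE ⟨m0, m1, m2⟩
  obtain ⟨p, hp, hm0⟩ := hmemsup _ m0
  obtain ⟨q, hq, hm1⟩ := hmemsup _ m1
  obtain ⟨r, hr, hm2⟩ := hmemsup _ m2
  exact (key3 p hp q hq r hr).2 y0 y1 y2 mm h01 h02 h12 hE
    ⟨Finset.mem_union_left _ (Finset.mem_union_left _ hm0),
     Finset.mem_union_left _ (Finset.mem_union_right _ hm1),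
     Finset.mem_union_right _ hm2⟩

end Main


/-- If `Γ` is a 3-uniform hypergraph in which any two points have at most `d` common
completions to a hyperedge, then the finite approximation coloring poset `R(Γ)` is a
countable union of Ramsey-centered sets. -/
theorem stmt10 (Γ : Set (Finset X)) (hΓ : ∀ e ∈ Γ, e.card = 3) (d : ℕ)
    (hd : ∀ x₀ x₁ : X, {x₂ | ({x₀, x₁, x₂} : Finset X) ∈ Γ}.Finite ∧
      {x₂ | ({x₀, x₁, x₂} : Finset X) ∈ Γ}.ncard ≤ d) :
    ∃ A : ℕ → Set (Finset (X × ℕ)),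
      (⋃ k, A k) = {p | IsCond3 Γ p} ∧
      ∀ k, A k ⊆ {p | IsCond3 Γ p} ∧ RamseyCentered {p | IsCond3 Γ p} (A k) := by
  classical
  refine ⟨fun i => {p | IsCond3 Γ p ∧ p.card = (Nat.unpair i).1 ∧
    ∀ a ∈ p, a.2 < (Nat.unpair i).2}, ?_, ?_⟩
  · ext p
    simp only [Set.mem_iUnion, Set.mem_setOf_eq]
    constructor
    · rintro ⟨i, h, _, _⟩; exact h
    · intro h
      refine ⟨Nat.pair p.card ((p.sup (fun a => a.2)) + 1), h, ?_, ?_⟩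
      · rw [Nat.unpair_pair]
      · intro a ha
        rw [Nat.unpair_pair]
        exact Nat.lt_succ_of_le (Finset.le_sup (f := fun a => a.2) ha)
  · intro i
    refine ⟨fun p hp => hp.1, ?_⟩
    intro n
    set kk : ℕ := (Nat.unpair i).1 with hkk
    set ll : ℕ := (Nat.unpair i).2 with hll
    set M : ℕ := 2^(kk*ll) * sfB kk (2^(kk*ll) * ((2*(kk*kk*d)+1)*(n + (kk*kk*d)*n*n)))
      with hM
    have hM1 : 1 ≤ M := by
      have h1 := sfB_pos kk (2^(kk*ll) * ((2*(kk*kk*d)+1)*(n + (kk*kk*d)*n*n)))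
      have h2 : 0 < 2^(kk*ll) := Nat.pow_pos (by omega)
      rw [hM]
      exact Nat.mul_pos h2 (by omega)
    set m : ℕ := n * M + M with hm
    have hm1 : 0 < m := by omega
    refine ⟨m, fun f hf => ?_⟩
    set S : Finset (Finset (X × ℕ)) := Finset.univ.image f with hSdef
    have hSprop : ∀ p ∈ S, IsCond3 Γ p ∧ p.card = kk ∧ ∀ a ∈ p, a.2 < ll := by
      intro p hp
      obtain ⟨j, _, rfl⟩ := Finset.mem_image.mp hp
      exact hf j
    by_cases hbig : M ≤ S.card
    · obtain ⟨G, hGS, hGcard, hGcond⟩ := main_extract Γ d hd kk ll n S hSprop hbig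
      have hex : ∀ p ∈ G, ∃ j : Fin m, f j = p := by
        intro p hp
        obtain ⟨j, _, hj⟩ := Finset.mem_image.mp (hGS hp)
        exact ⟨j, hj⟩
      set pick : Finset (X × ℕ) → Fin m :=
        fun p => if h : ∃ j : Fin m, f j = p then h.choose else ⟨0, hm1⟩ with hpick
      have hpickf : ∀ p ∈ G, f (pick p) = p := by
        intro p hp
        have h := hex p hp
        rw [hpick]
        simp only [dif_pos h]
        exact h.choose_spec
      have hpickinj : Set.InjOn pick ↑G := by
        intro p1 hp1 p2 hp2 h
        rw [← hpickf p1 (Finset.mem_coe.mp hp1), ← hpickf p2 (Finset.mem_coe.mp hp2), h]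
      refine ⟨G.image pick, by rw [Finset.card_image_of_injOn hpickinj, hGcard],
        G.sup id, hGcond, ?_⟩
      intro j hj
      obtain ⟨p, hp, rfl⟩ := Finset.mem_image.mp hj
      rw [hpickf p hp]
      exact Finset.le_sup (f := id) hp
    · push_neg at hbig
      have hmaps : ∀ j ∈ (Finset.univ : Finset (Fin m)), f j ∈ S :=
        fun j _ => Finset.mem_image.mpr ⟨j, Finset.mem_univ j, rfl⟩
      have hSne : S.Nonempty := ⟨f ⟨0, hm1⟩, hmaps _ (Finset.mem_univ _)⟩
      have hcount : S.card * n ≤ (Finset.univ : Finset (Fin m)).card := by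
        rw [Finset.card_univ, Fintype.card_fin]
        calc S.card * n ≤ M * n := Nat.mul_le_mul_right n (le_of_lt hbig)
          _ = n * M := Nat.mul_comm _ _
          _ ≤ m := by omega
      obtain ⟨p, hpS, hfib⟩ := Finset.exists_le_card_fiber_of_mul_le_card_of_maps_to
        hmaps hSne hcount
      obtain ⟨b, hbsub, hbcard⟩ := Finset.exists_subset_card_eq hfib
      refine ⟨b, hbcard, p, (hSprop p hpS).1, ?_⟩
      intro j hj
      have := (Finset.mem_filter.mp (hbsub hj)).2
      rw [this]
end

section
/- Let X be a set and Γ a graph on X such that every vertex has finite degree. Then the poset R(Γ) of finite partial proper Γ-colorings p : X ⇀ ℕ ordered by reverse inclusion is a countable union of Ramsey-centered sets, witnessed by the sets A_{k,l,d} of conditions with domain of size k, range in {0,...,l-1}, and every point of the domain having at most d neighbors. -/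
variable {X : Type*} [DecidableEq X]

open scoped Classical

section Aux

def sunBound (N : ℕ) : ℕ → ℕ
  | 0 => 2
  | (k+1) => N * (k+1) * sunBound N k + 2

lemma two_le_sunBound (N k : ℕ) : 2 ≤ sunBound N k := by
  cases k <;> simp [sunBound]

lemma sunflower_lemma_s11 {α : Type*} [DecidableEq α] (N : ℕ) :
    ∀ (k : ℕ) (S : Finset (Finset α)), (∀ s ∈ S, s.card ≤ k) →
    sunBound N k ≤ S.card →
    ∃ D ⊆ S, D.card = N ∧ ∃ C, ∀ s ∈ D, ∀ t ∈ D, s ≠ t → s ∩ t = C := by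
  intro k
  induction k with
  | zero =>
    intro S hcard hS
    exfalso
    have hsub : S ⊆ {∅} := by
      intro s hs
      simp [Finset.card_eq_zero.mp (Nat.le_zero.mp (hcard s hs))]
    have h1 := Finset.card_le_card hsub
    have h2 : ({∅} : Finset (Finset α)).card = 1 := rfl
    simp [sunBound] at hS
    omega
  | succ k IH =>
    intro S hcard hS
    -- maximal pairwise disjoint subfamily
    set P : Finset (Finset (Finset α)) :=
      S.powerset.filter (fun D => ∀ s ∈ D, ∀ t ∈ D, s ≠ t → s ∩ t = ∅) with hP
    have hPne : P.Nonempty := by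
      refine ⟨∅, ?_⟩
      simp [hP]
    obtain ⟨Dm, hDmP, hmax⟩ := P.exists_max_image Finset.card hPne
    have hDmS : Dm ⊆ S := by
      have := (Finset.mem_filter.mp hDmP).1
      exact Finset.mem_powerset.mp this
    have hDmpd : ∀ s ∈ Dm, ∀ t ∈ Dm, s ≠ t → s ∩ t = ∅ :=
      (Finset.mem_filter.mp hDmP).2
    by_cases hbig : N ≤ Dm.card
    · obtain ⟨D, hDsub, hDcard⟩ := Finset.exists_subset_card_eq hbig
      exact ⟨D, hDsub.trans hDmS, hDcard, ∅,
        fun s hs t ht hst => hDmpd s (hDsub hs) t (hDsub ht) hst⟩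
    · push_neg at hbig
      set Y : Finset α := Dm.biUnion id with hY
      have hYcard : Y.card ≤ N * (k+1) := by
        have h1 : Y.card ≤ Dm.card * (k+1) :=
          Finset.card_biUnion_le_card_mul _ _ _ (fun s hs => hcard s (hDmS hs))
        calc Y.card ≤ Dm.card * (k+1) := h1
          _ ≤ N * (k+1) := Nat.mul_le_mul_right _ (le_of_lt hbig)
      -- every nonempty member of S meets Y
      have hmeet : ∀ s ∈ S, s ≠ ∅ → (s ∩ Y).Nonempty := by
        intro s hsS hsne
        by_contra hno
        rw [Finset.not_nonempty_iff_eq_empty] at hno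
        have hsnotin : s ∉ Dm := by
          intro hsin
          have hsY : s ⊆ Y := Finset.subset_biUnion_of_mem id hsin
          have : s ∩ Y = s := Finset.inter_eq_left.mpr hsY
          rw [this] at hno
          exact hsne hno
        have hins : insert s Dm ∈ P := by
          rw [hP, Finset.mem_filter, Finset.mem_powerset]
          constructor
          · exact Finset.insert_subset hsS hDmS
          · intro u hu v hv huv
            rcases Finset.mem_insert.mp hu with hu1 | hu1 <;>
              rcases Finset.mem_insert.mp hv with hv1 | hv1
            · rw [hu1, hv1] at huv; exact absurd rfl huv
            · rw [hu1]
              have hvY : v ⊆ Y := Finset.subset_biUnion_of_mem id hv1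
              have hh : s ∩ v ⊆ s ∩ Y := Finset.inter_subset_inter (le_refl _) hvY
              rw [hno] at hh
              exact Finset.subset_empty.mp hh
            · rw [hv1, Finset.inter_comm]
              have huY : u ⊆ Y := Finset.subset_biUnion_of_mem id hu1
              have hh : s ∩ u ⊆ s ∩ Y := Finset.inter_subset_inter (le_refl _) huY
              rw [hno] at hh
              exact Finset.subset_empty.mp hh
            · exact hDmpd u hu1 v hv1 huv
        have := hmax _ hins
        rw [Finset.card_insert_of_notMem hsnotin] at this
        omega
      set S' : Finset (Finset α) := S.erase ∅ with hS'
      have hS'card : S.card ≤ S'.card + 1 := by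
        have : S ⊆ insert ∅ S' := by
          intro s hs
          by_cases h : s = ∅
          · simp [h]
          · exact Finset.mem_insert_of_mem (Finset.mem_erase.mpr ⟨h, hs⟩)
        calc S.card ≤ (insert ∅ S').card := Finset.card_le_card this
          _ ≤ S'.card + 1 := Finset.card_insert_le _ _
      set B := sunBound N k with hB
      have hpig : ∃ y ∈ Y, B ≤ (S'.filter (fun s => y ∈ s)).card := by
        by_contra hno
        push_neg at hno
        have hsub : S' ⊆ Y.biUnion (fun y => S'.filter (fun s => y ∈ s)) := by
          intro s hs
          have hsS : s ∈ S := Finset.mem_of_mem_erase hs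
          have hsne : s ≠ ∅ := (Finset.mem_erase.mp hs).1
          obtain ⟨y, hy⟩ := hmeet s hsS hsne
          rw [Finset.mem_inter] at hy
          exact Finset.mem_biUnion.mpr ⟨y, hy.2, Finset.mem_filter.mpr ⟨hs, hy.1⟩⟩
        have h1 : S'.card ≤ Y.card * (B - 1) := by
          calc S'.card ≤ (Y.biUnion (fun y => S'.filter (fun s => y ∈ s))).card :=
                Finset.card_le_card hsub
            _ ≤ Y.card * (B - 1) := Finset.card_biUnion_le_card_mul _ _ _
                (fun y hy => by have := hno y hy; omega)
        have h2 : Y.card * (B - 1) ≤ N * (k+1) * (B - 1) :=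
          Nat.mul_le_mul_right _ hYcard
        have h3 : N * (k+1) * (B - 1) ≤ N * (k+1) * B :=
          Nat.mul_le_mul_left _ (Nat.sub_le _ _)
        have h4 : N * (k+1) * B + 2 ≤ S.card := hS
        have hB2 : 2 ≤ B := two_le_sunBound N k
        -- need strict: N*(k+1)*(B-1) ≤ N*(k+1)*B - N*(k+1) ... use:
        have h5 : N * (k+1) * (B - 1) + N * (k+1) * 1 = N * (k+1) * B := by
          rw [← Nat.mul_add]
          congr 1
          omega
        omega
      obtain ⟨y, _, hyB⟩ := hpig
      set T : Finset (Finset α) := S'.filter (fun s => y ∈ s) with hT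
      have hymem : ∀ s ∈ T, y ∈ s := fun s hs => (Finset.mem_filter.mp hs).2
      set T' : Finset (Finset α) := T.image (fun s => s.erase y) with hT'
      have hinj : Set.InjOn (fun s => Finset.erase s y) (T : Set (Finset α)) := by
        intro s hs t ht hst
        have h1 : insert y (s.erase y) = s := Finset.insert_erase (hymem s hs)
        have h2 : insert y (t.erase y) = t := Finset.insert_erase (hymem t ht)
        rw [← h1, ← h2]
        simp only at hst
        rw [hst]
      have hT'card : B ≤ T'.card := by
        rw [hT', Finset.card_image_of_injOn hinj]
        exact hyB
      have hT'small : ∀ t ∈ T', t.card ≤ k := by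
        intro t ht
        obtain ⟨s, hs, rfl⟩ := Finset.mem_image.mp ht
        have hsS : s ∈ S := Finset.mem_of_mem_erase (Finset.mem_filter.mp hs).1
        rw [Finset.card_erase_of_mem (hymem s hs)]
        have := hcard s hsS
        omega
      obtain ⟨D'', hD''sub, hD''card, C, hC⟩ := IH T' hT'small hT'card
      have hynot : ∀ t ∈ D'', y ∉ t := by
        intro t ht
        obtain ⟨s, _, rfl⟩ := Finset.mem_image.mp (hD''sub ht)
        exact Finset.notMem_erase _ _
      set E : Finset (Finset α) := D''.image (insert y) with hE
      have hinj2 : Set.InjOn (insert y) (D'' : Set (Finset α)) := by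
        intro a ha b hb hab
        have h1 : (insert y a).erase y = a := Finset.erase_insert (hynot a ha)
        have h2 : (insert y b).erase y = b := Finset.erase_insert (hynot b hb)
        rw [← h1, ← h2, hab]
      refine ⟨E, ?_, ?_, insert y C, ?_⟩
      · intro u hu
        obtain ⟨t, ht, rfl⟩ := Finset.mem_image.mp hu
        obtain ⟨s, hsT, rfl⟩ := Finset.mem_image.mp (hD''sub ht)
        rw [Finset.insert_erase (hymem s hsT)]
        exact Finset.mem_of_mem_erase (Finset.mem_filter.mp hsT).1
      · rw [hE, Finset.card_image_of_injOn hinj2, hD''card]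
      · intro u hu v hv huv
        obtain ⟨a, ha, rfl⟩ := Finset.mem_image.mp hu
        obtain ⟨b, hb, rfl⟩ := Finset.mem_image.mp hv
        have hab : a ≠ b := fun h => huv (by rw [h])
        have : insert y a ∩ insert y b = insert y (a ∩ b) := by
          ext z
          simp only [Finset.mem_inter, Finset.mem_insert]
          tauto
        rw [this, hC a ha b hb hab]


lemma indep_lemma {β : Type*} [DecidableEq β] (R : β → β → Prop)
    (hsym : ∀ p q, R p q → R q p) (D0 : ℕ) :
    ∀ (t : ℕ) (D : Finset β),
    (∀ p ∈ D, ∀ F : Finset β, F ⊆ D → (∀ q ∈ F, q ≠ p ∧ R p q) → F.card ≤ D0) →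
    t * (D0 + 1) ≤ D.card →
    ∃ I ⊆ D, I.card = t ∧ ∀ p ∈ I, ∀ q ∈ I, p ≠ q → ¬ R p q := by
  intro t
  induction t with
  | zero => intro D _ _; exact ⟨∅, Finset.empty_subset _, Finset.card_empty, by simp⟩
  | succ t IH =>
    intro D hdeg hcard
    have hDne : D.Nonempty := by
      rw [← Finset.card_pos]
      have : 1 ≤ (t+1) * (D0+1) := Nat.one_le_iff_ne_zero.mpr (by positivity)
      omega
    obtain ⟨p, hp⟩ := hDne
    set D' : Finset β := D.filter (fun q => q ≠ p ∧ ¬ R p q) with hD'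
    have hsub : D ⊆ D' ∪ insert p (D.filter (fun q => q ≠ p ∧ R p q)) := by
      intro q hq
      by_cases h1 : q = p
      · subst h1; exact Finset.mem_union_right _ (Finset.mem_insert_self _ _)
      · by_cases h2 : R p q
        · exact Finset.mem_union_right _ (Finset.mem_insert_of_mem (Finset.mem_filter.mpr ⟨hq, h1, h2⟩))
        · exact Finset.mem_union_left _ (Finset.mem_filter.mpr ⟨hq, h1, h2⟩)
    have hcard' : t * (D0 + 1) ≤ D'.card := by
      have h1 : D.card ≤ D'.card + ((insert p (D.filter (fun q => q ≠ p ∧ R p q))).card) :=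
        le_trans (Finset.card_le_card hsub) (Finset.card_union_le _ _)
      have hfd : (D.filter (fun q => q ≠ p ∧ R p q)).card ≤ D0 :=
        hdeg p hp _ (Finset.filter_subset _ _) (fun q hq => (Finset.mem_filter.mp hq).2)
      have h2 : (insert p (D.filter (fun q => q ≠ p ∧ R p q))).card ≤ D0 + 1 :=
        le_trans (Finset.card_insert_le _ _) (by omega)
      have h3 : (t+1) * (D0+1) = t * (D0+1) + (D0+1) := by ring
      omega
    have hdeg' : ∀ q ∈ D', ∀ F : Finset β, F ⊆ D' →
        (∀ r ∈ F, r ≠ q ∧ R q r) → F.card ≤ D0 := by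
      intro q hq F hFD hFp
      exact hdeg q (Finset.mem_of_mem_filter _ hq) F
        (hFD.trans (Finset.filter_subset _ _)) hFp
    obtain ⟨I', hI'sub, hI'card, hI'pw⟩ := IH D' hdeg' hcard'
    have hpnot : p ∉ I' := by
      intro h
      have := (Finset.mem_filter.mp (hI'sub h)).2.1
      exact this rfl
    refine ⟨insert p I', ?_, ?_, ?_⟩
    · exact Finset.insert_subset hp (hI'sub.trans (Finset.filter_subset _ _))
    · rw [Finset.card_insert_of_notMem hpnot, hI'card]
    · intro u hu v hv huv
      rcases Finset.mem_insert.mp hu with rfl | hu1 <;>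
        rcases Finset.mem_insert.mp hv with hv1 | hv1
      · exact absurd hv1.symm huv
      · exact (Finset.mem_filter.mp (hI'sub hv1)).2.2
      · rw [hv1]
        intro hR
        exact (Finset.mem_filter.mp (hI'sub hu1)).2.2 (hsym _ _ hR)
      · exact hI'pw u hu1 v hv1 huv


lemma count_lemma {γ β : Type*} [DecidableEq γ] (F : Finset β) (g : β → Finset γ)
    (W : Finset γ)
    (hdisj : ∀ p ∈ F, ∀ q ∈ F, p ≠ q → g p ∩ g q = ∅)
    (hmeet : ∀ p ∈ F, ∃ a, a ∈ g p ∧ a ∈ W) : F.card ≤ W.card := by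
  rcases F.eq_empty_or_nonempty with rfl | ⟨p0, hp0⟩
  · simp
  obtain ⟨a0, _, _⟩ := hmeet p0 hp0
  haveI : Inhabited γ := ⟨a0⟩
  set wit : β → γ := fun p => if h : ∃ a, a ∈ g p ∧ a ∈ W then h.choose else default
    with hwit
  have hspec : ∀ p ∈ F, wit p ∈ g p ∧ wit p ∈ W := by
    intro p hp
    have h := hmeet p hp
    simp only [hwit, dif_pos h]
    exact h.choose_spec
  refine Finset.card_le_card_of_injOn wit (fun p hp => (hspec p hp).2) ?_
  intro p hp q hq hpq
  by_contra hne
  have h1 : wit p ∈ g p ∩ g q := by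
    rw [Finset.mem_inter]
    exact ⟨(hspec p hp).1, hpq ▸ (hspec q hq).1⟩
  rw [hdisj p hp q hq hne] at h1
  exact absurd h1 (Finset.notMem_empty _)

end Aux

/-- A condition of the finite approximation coloring poset `R(Γ)` for a graph `G`:
a finite partial function into ℕ which is a proper partial coloring of `G`. -/
def IsCondG (G : X → X → Prop) (p : Finset (X × ℕ)) : Prop :=
  (∀ a ∈ p, ∀ b ∈ p, Prod.fst a = Prod.fst b → a = b) ∧
  ∀ x y : X, ∀ n : ℕ, G x y → ¬((x, n) ∈ p ∧ (y, n) ∈ p)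

/-- The set `A_{k,l,d}` of conditions with domain of size `k`, range in `{0,…,l-1}`,
and every point of the domain having at most `d` neighbors. -/
def Akld (G : X → X → Prop) (k l d : ℕ) : Set (Finset (X × ℕ)) :=
  {p | IsCondG G p ∧ (p.image Prod.fst).card = k ∧ (∀ a ∈ p, Prod.snd a < l) ∧
    ∀ a ∈ p, {y | G (Prod.fst a) y}.ncard ≤ d}

lemma card_of_cond {G : X → X → Prop} {p : Finset (X × ℕ)} (h : IsCondG G p) :
    (p.image Prod.fst).card = p.card :=
  Finset.card_image_of_injOn (fun a ha b hb hab => h.1 a ha b hb hab)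

/-- For a locally finite graph `G`, the finite approximation coloring poset is a
countable union of Ramsey-centered sets, witnessed by the sets `A_{k,l,d}`. -/
theorem stmt11 (G : X → X → Prop) (hsym : ∀ x y, G x y → G y x)
    (hirr : ∀ x, ¬ G x x) (hlf : ∀ x, {y | G x y}.Finite) :
    (∀ p : Finset (X × ℕ), IsCondG G p → ∃ k l d, p ∈ Akld G k l d) ∧
    ∀ k l d, RamseyCentered {p | IsCondG G p} (Akld G k l d) := by
  constructor
  · intro p hp
    refine ⟨(p.image Prod.fst).card, p.sup (fun a => a.2) + 1,
      p.sup (fun a => {y | G a.1 y}.ncard), hp, rfl, ?_, ?_⟩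
    · intro a ha
      exact Nat.lt_succ_of_le (Finset.le_sup (f := fun a => a.2) ha)
    · intro a ha
      exact Finset.le_sup (f := fun a => {y | G a.1 y}.ncard) ha
  · intro k l d n
    rcases Nat.eq_zero_or_pos n with rfl | hn
    · refine ⟨0, fun f _ => ⟨∅, Finset.card_empty, ∅, ?_, by simp⟩⟩
      exact ⟨by simp, by simp⟩
    set D0 : ℕ := (k + k * d) * l with hD0
    set N : ℕ := n * (D0 + 1) with hN
    set B : ℕ := sunBound N k with hB
    refine ⟨(n-1) * B + 1, ?_⟩
    intro f hA
    by_cases hfib : ∃ p : Finset (X × ℕ), n ≤ (Finset.univ.filter (fun i => f i = p)).card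
    · obtain ⟨p, hp⟩ := hfib
      obtain ⟨b, hbsub, hbcard⟩ := Finset.exists_subset_card_eq hp
      have hbne : b.Nonempty := Finset.card_pos.mp (by omega)
      obtain ⟨i0, hi0⟩ := hbne
      have hfi0 : f i0 = p := (Finset.mem_filter.mp (hbsub hi0)).2
      refine ⟨b, hbcard, p, ?_, ?_⟩
      · exact (hfi0 ▸ (hA i0)).1
      · intro i hi
        rw [(Finset.mem_filter.mp (hbsub hi)).2]
    · push_neg at hfib
      set T : Finset (Finset (X × ℕ)) := Finset.univ.image f with hT
      have hTmem : ∀ s ∈ T, s ∈ Akld G k l d := by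
        intro s hs
        obtain ⟨i, _, rfl⟩ := Finset.mem_image.mp hs
        exact hA i
      have hTB : B ≤ T.card := by
        have hsub : (Finset.univ : Finset (Fin ((n-1) * B + 1))) ⊆
            T.biUnion (fun p => Finset.univ.filter (fun i => f i = p)) := by
          intro i _
          exact Finset.mem_biUnion.mpr ⟨f i, Finset.mem_image_of_mem f (Finset.mem_univ i),
            Finset.mem_filter.mpr ⟨Finset.mem_univ i, rfl⟩⟩
        have h1 : (n-1) * B + 1 ≤ T.card * (n-1) := by
          calc (n-1) * B + 1 = (Finset.univ : Finset (Fin ((n-1) * B + 1))).card := by simp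
            _ ≤ (T.biUnion (fun p => Finset.univ.filter (fun i => f i = p))).card :=
              Finset.card_le_card hsub
            _ ≤ T.card * (n-1) := Finset.card_biUnion_le_card_mul _ _ _
              (fun p _ => by have := hfib p; omega)
        rcases Nat.eq_zero_or_pos (n-1) with h0 | hpos
        · rw [h0] at h1; simp at h1
        · by_contra hlt
          push_neg at hlt
          have h2 : T.card * (n-1) ≤ (B-1) * (n-1) := Nat.mul_le_mul_right _ (by omega)
          have hB1 : 1 ≤ B := le_trans (by norm_num) (two_le_sunBound N k)
          have h3 : (B-1)*(n-1) + (n-1) = B * (n-1) := by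
            have hb : (B-1) + 1 = B := by omega
            calc (B-1)*(n-1) + (n-1) = ((B-1)+1)*(n-1) := by ring
              _ = B * (n-1) := by rw [hb]
          have h5 : (n-1) * B = B * (n-1) := Nat.mul_comm _ _
          omega
      have hTcard : ∀ s ∈ T, s.card ≤ k := by
        intro s hs
        have h := hTmem s hs
        have h2 := card_of_cond h.1
        rw [← h.2.1, h2]
      obtain ⟨D, hDT, hDcard, C, hC⟩ := sunflower_lemma_s11 N k T hTcard hTB
      have hDmem : ∀ s ∈ D, s ∈ Akld G k l d := fun s hs => hTmem s (hDT hs)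
      set R : Finset (X × ℕ) → Finset (X × ℕ) → Prop :=
        fun u v => ¬ IsCondG G (u ∪ v) with hR
      have hRsym : ∀ u v, R u v → R v u := by
        intro u v h hc
        exact h (by rwa [Finset.union_comm] at hc)
      -- degree bound
      have hdeg : ∀ p ∈ D, ∀ F : Finset (Finset (X × ℕ)), F ⊆ D →
          (∀ q ∈ F, q ≠ p ∧ R p q) → F.card ≤ D0 := by
        intro p hp F hFD hFprop
        have hpA := hDmem p hp
        set W : Finset (X × ℕ) :=
          ((p.image Prod.fst) ∪ (p.image Prod.fst).biUnion (fun x => (hlf x).toFinset))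
            ×ˢ Finset.range l with hW
        have hWcard : W.card ≤ D0 := by
          have h1 : ((p.image Prod.fst) ∪
              (p.image Prod.fst).biUnion (fun x => (hlf x).toFinset)).card ≤ k + k * d := by
            refine le_trans (Finset.card_union_le _ _) ?_
            have h2 : (p.image Prod.fst).card = k := hpA.2.1
            have h3 : ((p.image Prod.fst).biUnion (fun x => (hlf x).toFinset)).card ≤ k * d := by
              refine le_trans (Finset.card_biUnion_le_card_mul _ _ d ?_) (by rw [h2])
              intro x hx
              obtain ⟨a, ha, rfl⟩ := Finset.mem_image.mp hx
              have h4 := hpA.2.2.2 a ha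
              rwa [Set.ncard_eq_toFinset_card _ (hlf a.1)] at h4
            omega
          calc W.card = _ * (Finset.range l).card := Finset.card_product _ _
            _ ≤ (k + k*d) * l := by
              rw [Finset.card_range]
              exact Nat.mul_le_mul_right _ h1
        have hFdisj : ∀ u ∈ F, ∀ v ∈ F, u ≠ v → (u \ C) ∩ (v \ C) = ∅ := by
          intro u hu v hv huv
          have huv' : u ∩ v = C := hC u (hFD hu) v (hFD hv) huv
          ext a
          simp only [Finset.mem_inter, Finset.mem_sdiff, Finset.notMem_empty, iff_false]
          rintro ⟨⟨hau, haC⟩, ⟨hav, _⟩⟩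
          exact haC (huv' ▸ Finset.mem_inter.mpr ⟨hau, hav⟩)
        have hFmeet : ∀ q ∈ F, ∃ a, a ∈ q \ C ∧ a ∈ W := by
          intro q hq
          have hqD : q ∈ D := hFD hq
          have hqp : q ≠ p := (hFprop q hq).1
          have hRpq : ¬ IsCondG G (p ∪ q) := (hFprop q hq).2
          have hqA := hDmem q hqD
          have hpC : IsCondG G p := hpA.1
          have hqC : IsCondG G q := hqA.1
          have hCpq : p ∩ q = C := hC p hp q hqD (Ne.symm hqp)
          have hCsubp : C ⊆ p := hCpq ▸ Finset.inter_subset_left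
          have hmemW : ∀ a : X × ℕ, a ∈ q → a.2 < l →
              (a.1 ∈ p.image Prod.fst ∨
               a.1 ∈ (p.image Prod.fst).biUnion (fun x => (hlf x).toFinset)) →
              a ∉ C → a ∈ q \ C ∧ a ∈ W := by
            intro a haq hal hfst haC
            refine ⟨Finset.mem_sdiff.mpr ⟨haq, haC⟩, ?_⟩
            rw [hW, Finset.mem_product]
            exact ⟨Finset.mem_union.mpr hfst, Finset.mem_range.mpr hal⟩
          rw [IsCondG, not_and_or] at hRpq
          rcases hRpq with hfun | hprop
          · push_neg at hfun
            obtain ⟨a, ha, b, hb, hab, hne⟩ := hfun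
            rcases Finset.mem_union.mp ha with hap | haq <;>
              rcases Finset.mem_union.mp hb with hbp | hbq
            · exact absurd (hpC.1 a hap b hbp hab) hne
            · have hbC : b ∉ C := fun h => hne (hpC.1 a hap b (hCsubp h) hab)
              refine ⟨b, hmemW b hbq (hqA.2.2.1 b hbq) (Or.inl ?_) hbC⟩
              rw [← hab]
              exact Finset.mem_image_of_mem _ hap
            · have haC : a ∉ C := fun h => hne (hpC.1 a (hCsubp h) b hbp hab)
              refine ⟨a, hmemW a haq (hqA.2.2.1 a haq) (Or.inl ?_) haC⟩
              rw [hab]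
              exact Finset.mem_image_of_mem _ hbp
            · exact absurd (hqC.1 a haq b hbq hab) hne
          · push_neg at hprop
            obtain ⟨x, y, c, hG, hx, hy⟩ := hprop
            rcases Finset.mem_union.mp hx with hxp | hxq <;>
              rcases Finset.mem_union.mp hy with hyp | hyq
            · exact absurd ⟨hxp, hyp⟩ (hpC.2 x y c hG)
            · have hyC : (y,c) ∉ C := fun h => (hpC.2 x y c hG) ⟨hxp, hCsubp h⟩
              refine ⟨(y,c), hmemW (y,c) hyq (hqA.2.2.1 _ hyq) (Or.inr ?_) hyC⟩
              refine Finset.mem_biUnion.mpr ⟨x, Finset.mem_image_of_mem _ hxp, ?_⟩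
              exact (hlf x).mem_toFinset.mpr hG
            · have hxC : (x,c) ∉ C := fun h => (hpC.2 x y c hG) ⟨hCsubp h, hyp⟩
              refine ⟨(x,c), hmemW (x,c) hxq (hqA.2.2.1 _ hxq) (Or.inr ?_) hxC⟩
              refine Finset.mem_biUnion.mpr ⟨y, Finset.mem_image_of_mem _ hyp, ?_⟩
              exact (hlf y).mem_toFinset.mpr (hsym x y hG)
            · exact absurd ⟨hxq, hyq⟩ (hqC.2 x y c hG)
        exact le_trans (count_lemma F (fun q => q \ C) W hFdisj hFmeet) hWcard
      obtain ⟨I, hIsub, hIcard, hIpw⟩ := indep_lemma R hRsym D0 n D hdeg (by omega)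
      have hpair : ∀ u ∈ I, ∀ v ∈ I, IsCondG G (u ∪ v) := by
        intro u hu v hv
        by_cases huv : u = v
        · subst huv
          rw [Finset.union_self]
          exact (hDmem u (hIsub hu)).1
        · by_contra h
          exact (hIpw u hu v hv huv) h
      set r : Finset (X × ℕ) := I.sup id with hr
      have hrmem : ∀ a ∈ r, ∃ u ∈ I, a ∈ u := by
        intro a ha
        rw [hr, Finset.mem_sup] at ha
        exact ha
      have hrcond : IsCondG G r := by
        constructor
        · intro a ha b hb hab
          obtain ⟨u, hu, hau⟩ := hrmem a ha
          obtain ⟨v, hv, hbv⟩ := hrmem b hb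
          exact (hpair u hu v hv).1 a (Finset.mem_union_left _ hau)
            b (Finset.mem_union_right _ hbv) hab
        · intro x y c hG hmem
          obtain ⟨hx, hy⟩ := hmem
          obtain ⟨u, hu, hau⟩ := hrmem _ hx
          obtain ⟨v, hv, hbv⟩ := hrmem _ hy
          exact (hpair u hu v hv).2 x y c hG
            ⟨Finset.mem_union_left _ hau, Finset.mem_union_right _ hbv⟩
      haveI : Inhabited (Fin ((n-1) * B + 1)) := ⟨⟨0, by omega⟩⟩
      set idx : Finset (X × ℕ) → Fin ((n-1) * B + 1) := fun s =>
        if h : ∃ i, f i = s then h.choose else default with hidx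
      have hidxspec : ∀ s ∈ I, f (idx s) = s := by
        intro s hs
        have hsT : s ∈ T := hDT (hIsub hs)
        obtain ⟨i, _, hi⟩ := Finset.mem_image.mp hsT
        have h : ∃ i, f i = s := ⟨i, hi⟩
        simp only [hidx, dif_pos h]
        exact h.choose_spec
      refine ⟨I.image idx, ?_, r, hrcond, ?_⟩
      · rw [Finset.card_image_of_injOn, hIcard]
        intro s hs t ht hst
        rw [← hidxspec s hs, ← hidxspec t ht, hst]
      · intro i hi
        obtain ⟨s, hs, rfl⟩ := Finset.mem_image.mp hi
        rw [hidxspec s hs]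
        exact Finset.le_sup (f := id) hs
end

section
/- For every n ≥ 2 and every m ∈ ℕ there exists a finite interval I of natural numbers such that for every partition of the set of functions n^I into m pieces, one of the pieces contains a combinatorial line. -/
/-- Finitary Hales–Jewett theorem on intervals: for every `n ≥ 2` and every number `m`
of pieces there is a finite interval `I = [a, b)` of natural numbers such that every
partition of `n^I` into `m` pieces has a piece containing a combinatorial line. -/
theorem stmt13 (n m : ℕ) (hn : 2 ≤ n) :
    ∃ a b : ℕ, a < b ∧
      ∀ part : (((Finset.Ico a b : Finset ℕ) : Type) → Fin n) → Fin m,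
        ∃ (y : Fin n → ((Finset.Ico a b : Finset ℕ) : Type) → Fin n)
          (s : Finset ((Finset.Ico a b : Finset ℕ) : Type)),
          s.Nonempty ∧
          (∀ j : Fin n, ∀ i ∈ s, y j i = j) ∧
          (∀ j j' : Fin n, ∀ i, i ∉ s → y j i = y j' i) ∧
          ∃ c : Fin m, ∀ j : Fin n, part (y j) = c := by
  classical
  rcases Nat.eq_zero_or_pos m with hm | hm
  · subst hm
    refine ⟨0, 1, one_pos, fun part => ?_⟩
    exact (part (fun _ => ⟨0, by omega⟩)).elim0
  obtain ⟨ι, ιfin, hι⟩ := Combinatorics.Line.exists_mono_in_high_dimension (Fin n) (Fin m)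
  -- ι is nonempty since a line exists (using the constant coloring)
  obtain ⟨l₀, -⟩ := hι (fun _ => ⟨0, hm⟩)
  have hne : Nonempty ι := ⟨Classical.choose l₀.proper⟩
  set N := Fintype.card ι with hN
  have hN0 : 0 < N := Fintype.card_pos
  refine ⟨0, N, hN0, fun part => ?_⟩
  have hcard : Fintype.card ι = Fintype.card ((Finset.Ico 0 N : Finset ℕ) : Type) := by
    simp [Fintype.card_coe]
    convert hN.symm
  let e : ι ≃ ((Finset.Ico 0 N : Finset ℕ) : Type) := Fintype.equivOfCardEq hcard
  obtain ⟨l, c, hc⟩ := hι (fun x => part (fun i => x (e.symm i)))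
  refine ⟨fun j i => l j (e.symm i),
    Finset.univ.filter (fun i => l.idxFun (e.symm i) = none), ?_, ?_, ?_, c, fun j => hc j⟩
  · obtain ⟨i₀, hi₀⟩ := l.proper
    exact ⟨e i₀, by simp [hi₀]⟩
  · intro j i hi
    simp only [Finset.mem_filter] at hi
    simp [Combinatorics.Line.apply_def, hi.2]
  · intro j j' i hi
    simp only [Finset.mem_filter, Finset.mem_univ, true_and] at hi
    cases h : l.idxFun (e.symm i) with
    | none => exact absurd h hi
    | some v => simp [Combinatorics.Line.apply_def, h]
end

section
/- (ZFC) If there is a function c : ℝ² → ℕ such that no 'rectangle' {r, r'} × {s, s'} (with r ≠ r' and s ≠ s') is c-monochromatic, then the Continuum Hypothesis holds. -/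
private theorem stmt15_aux (c : ℝ → ℝ → ℕ)
    (hc : ∀ r r' s s' : ℝ, r ≠ r' → s ≠ s' →
      ¬(c r s = c r s' ∧ c r s' = c r' s ∧ c r' s = c r' s')) :
    Cardinal.continuum.{0} = Cardinal.aleph.{0} 1 := by
  classical
  by_contra hne
  have h1 : Cardinal.aleph 1 < Cardinal.continuum :=
    lt_of_le_of_ne Cardinal.aleph_one_le_continuum (Ne.symm hne)
  have hle : Cardinal.aleph 1 ≤ Cardinal.mk ℝ := by
    rw [Cardinal.mk_real]; exact Cardinal.aleph_one_le_continuum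
  obtain ⟨S, hS⟩ := Cardinal.le_mk_iff_exists_set.mp hle
  let w : ℝ → ℝ → ℕ → ℝ := fun s₀ s₁ n =>
    if h : ∃ r, c s₀ r = n ∧ c s₁ r = n then h.choose else 0
  let W : Set ℝ := S ∪ Set.range (fun p : S × S × ℕ => w p.1 p.2.1 p.2.2)
  have hprod : Cardinal.mk (S × S × ℕ) = Cardinal.aleph 1 := by
    rw [Cardinal.mk_prod, Cardinal.mk_prod]
    simp only [Cardinal.lift_id, hS, Cardinal.mk_nat]
    rw [Cardinal.mul_eq_max (Cardinal.aleph0_le_aleph 1) le_rfl,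
      max_eq_left (Cardinal.aleph0_le_aleph 1),
      Cardinal.mul_eq_self (Cardinal.aleph0_le_aleph 1)]
  have hW : Cardinal.mk W < Cardinal.mk ℝ := by
    calc Cardinal.mk W
        ≤ Cardinal.mk S +
          Cardinal.mk (Set.range (fun p : S × S × ℕ => w p.1 p.2.1 p.2.2)) :=
          Cardinal.mk_union_le _ _
      _ ≤ Cardinal.aleph 1 + Cardinal.aleph 1 := by
          refine add_le_add hS.le ?_
          rw [← hprod]; exact Cardinal.mk_range_le
      _ = Cardinal.aleph 1 := by
          rw [Cardinal.add_eq_self (Cardinal.aleph0_le_aleph 1)]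
      _ < Cardinal.mk ℝ := by rw [Cardinal.mk_real]; exact h1
  have hWne : W ≠ Set.univ := by
    intro h
    rw [h] at hW
    simp [Cardinal.mk_univ] at hW
  obtain ⟨r₀, hr₀⟩ := (Set.ne_univ_iff_exists_notMem _).mp hWne
  have hni : ¬ Function.Injective (fun s : S => c s r₀) := by
    intro hinj
    have h2 := Cardinal.mk_le_of_injective hinj
    rw [hS, Cardinal.mk_nat] at h2
    exact absurd h2 (Cardinal.aleph0_lt_aleph_one).not_ge
  obtain ⟨s₀, s₁, heq, hne'⟩ := Function.not_injective_iff.mp hni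
  set n := c s₀ r₀ with hn
  have hex : ∃ r, c s₀ r = n ∧ c s₁ r = n := ⟨r₀, rfl, heq.symm⟩
  have hw : c s₀ (w s₀ s₁ n) = n ∧ c s₁ (w s₀ s₁ n) = n := by
    simp only [w, dif_pos hex]; exact hex.choose_spec
  set r₁ := w (s₀ : ℝ) s₁ n with hr₁def
  have hr₁W : r₁ ∈ W := Or.inr ⟨(s₀, s₁, n), rfl⟩
  have hr : r₀ ≠ r₁ := fun h => hr₀ (h ▸ hr₁W)
  have hs : (s₀ : ℝ) ≠ (s₁ : ℝ) := fun h => hne' (Subtype.ext h)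
  exact hc s₀ s₁ r₀ r₁ hs hr
    ⟨hw.1.symm, hw.1.trans heq, heq.symm.trans hw.2.symm⟩

/-- (ZFC) If there is a coloring `c : ℝ² → ℕ` with no monochromatic rectangle
`{r, r'} × {s, s'}` (with `r ≠ r'`, `s ≠ s'`), then the Continuum Hypothesis holds. -/
theorem stmt15 (c : ℝ → ℝ → ℕ)
    (hc : ∀ r r' s s' : ℝ, r ≠ r' → s ≠ s' →
      ¬(c r s = c r s' ∧ c r s' = c r' s ∧ c r' s = c r' s')) :
    Cardinal.continuum = Cardinal.aleph 1 := by
  calc Cardinal.continuum = Cardinal.lift.{_, 0} Cardinal.continuum.{0} :=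
        Cardinal.lift_continuum.symm
    _ = Cardinal.lift.{_, 0} (Cardinal.aleph.{0} 1) := by rw [stmt15_aux c hc]
    _ = Cardinal.aleph 1 := by rw [Cardinal.lift_aleph, Ordinal.lift_one]
end
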